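/- arXiv:2104.04590 — 4 statements merged into one kernel-verified Lean document; each statement's English description precedes it below -/
import Mathlib

section
/- Every polynomial p(A) = Σ_{j=0}^{2m+1} η_j A^j of odd degree at most 2m+1 that is nonnegative for all A ∈ [0,∞) can be written as p(A) = A·f(A)² + q(A)² where f and q are real polynomials of degree at most m. -/
open Polynomial Filter Topology

private lemma evalRight (g : Polynomial ℝ) (r : ℝ) (h : ∀ A, r < A → 0 ≤ g.eval A) :
    0 ≤ g.eval r := by
  have hc : Filter.Tendsto (fun A => g.eval A) (nhdsWithin r (Set.Ioi r)) (nhds (g.eval r)) :=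
    (g.continuous_aeval).continuousAt.tendsto.mono_left nhdsWithin_le_nhds
  exact ge_of_tendsto hc (eventually_nhdsWithin_of_forall fun A hA => h A hA)

private lemma evalLeft (g : Polynomial ℝ) (r : ℝ) (hr : 0 < r)
    (h : ∀ A, 0 ≤ A → A < r → g.eval A ≤ 0) : g.eval r ≤ 0 := by
  have hc : Filter.Tendsto (fun A => g.eval A) (nhdsWithin r (Set.Iio r)) (nhds (g.eval r)) :=
    (g.continuous_aeval).continuousAt.tendsto.mono_left nhdsWithin_le_nhds
  refine le_of_tendsto hc ?_
  filter_upwards [Ioo_mem_nhdsLT_of_mem (Set.mem_Ioc.mpr ⟨hr, le_rfl⟩)] with A hA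
  exact h A hA.1.le hA.2

private lemma sqmul (a b c d : Polynomial ℝ) :
    (X * a ^ 2 + b ^ 2) * (X * c ^ 2 + d ^ 2)
      = X * (a * d + b * c) ^ 2 + (b * d - X * a * c) ^ 2 := by ring

private lemma nn (a b : ℝ) (h : 0 ≤ a * b) (ha : 0 < a) : 0 ≤ b :=
  nonneg_of_mul_nonneg_right h ha

private lemma sqpos (x : ℝ) (h : x ≠ 0) : 0 < x ^ 2 := by
  rcases h.lt_or_gt with h | h <;> nlinarith

private lemma key : ∀ n : ℕ, ∀ p : Polynomial ℝ, p.natDegree ≤ n →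
    (∀ A : ℝ, 0 ≤ A → 0 ≤ p.eval A) → ∃ f q : Polynomial ℝ, p = X * f ^ 2 + q ^ 2 := by
  intro n
  induction n using Nat.strong_induction_on with
  | _ n ih =>
  intro p hdeg hpos
  by_cases hp0 : p = 0
  · exact ⟨0, 0, by simp [hp0]⟩
  by_cases hd0 : p.natDegree = 0
  · have hc : 0 ≤ p.coeff 0 := by
      simpa [coeff_zero_eq_eval_zero] using hpos 0 le_rfl
    refine ⟨0, C (Real.sqrt (p.coeff 0)), ?_⟩
    rw [← C_pow, Real.sq_sqrt hc]
    simpa using Polynomial.eq_C_of_natDegree_eq_zero hd0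
  · have hn1 : 1 ≤ p.natDegree := Nat.one_le_iff_ne_zero.mpr hd0
    have hnn : 1 ≤ n := le_trans hn1 hdeg
    have hdegpos : 0 < (p.map (algebraMap ℝ ℂ)).degree := by
      rw [degree_map_eq_of_injective (algebraMap ℝ ℂ).injective]
      exact natDegree_pos_iff_degree_pos.mp hn1
    obtain ⟨z, hz⟩ := Complex.exists_root hdegpos
    have hza : aeval z p = 0 := by rwa [aeval_def, ← eval_map]
    by_cases him : z.im = 0
    · -- real root
      have hzr : ((z.re : ℝ) : ℂ) = z := Complex.ext rfl (by simp [him])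
      have hr : p.eval z.re = 0 := by
        have h2 : ((p.eval z.re : ℝ) : ℂ) = 0 := by
          rw [← hzr] at hza
          rw [aeval_def] at hza
          rwa [show ((z.re : ℝ) : ℂ) = algebraMap ℝ ℂ z.re from rfl, eval₂_at_apply] at hza
        exact_mod_cast h2
      rcases lt_trichotomy z.re 0 with hrneg | hr0 | hrpos
      · -- negative real root
        obtain ⟨g, hg⟩ := dvd_iff_isRoot.mpr hr
        have hgne : g ≠ 0 := fun h => hp0 (by simp [hg, h])
        have hdg : g.natDegree ≤ n - 1 := by
          have hmul := natDegree_mul (X_sub_C_ne_zero z.re) hgne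
          rw [← hg, natDegree_X_sub_C] at hmul
          omega
        have hgpos : ∀ A, 0 ≤ A → 0 ≤ g.eval A := by
          intro A hA
          have h1 : (0:ℝ) < A - z.re := by linarith
          have h2 := hpos A hA
          rw [hg] at h2
          simp only [eval_mul, eval_sub, eval_X, eval_C] at h2
          exact nn _ _ h2 h1
        obtain ⟨f, q, hfq⟩ := ih (n - 1) (by omega) g hdg hgpos
        set s := Real.sqrt (-z.re) with hs0
        have hs : (C s) ^ 2 = C (-z.re) := by
          rw [← C_pow, hs0, Real.sq_sqrt (by linarith)]
        refine ⟨1 * q + C s * f, C s * q - X * 1 * f, ?_⟩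
        rw [hg, hfq, ← sqmul 1 (C s) f q, hs, map_neg]
        ring
      · -- root at zero
        rw [hr0] at hr
        have hdvd : X ∣ p := X_dvd_iff.mpr (by rw [coeff_zero_eq_eval_zero]; exact hr)
        obtain ⟨g, hg⟩ := hdvd
        have hgne : g ≠ 0 := fun h => hp0 (by simp [hg, h])
        have hdg : g.natDegree ≤ n - 1 := by
          have hmul := natDegree_mul (X_ne_zero (R := ℝ)) hgne
          rw [← hg, natDegree_X] at hmul
          omega
        have hgt : ∀ A, 0 < A → 0 ≤ g.eval A := by
          intro A hA
          have h2 := hpos A hA.le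
          rw [hg] at h2
          simp only [eval_mul, eval_X] at h2
          exact nn _ _ h2 hA
        have hgpos : ∀ A, 0 ≤ A → 0 ≤ g.eval A := by
          intro A hA
          rcases hA.eq_or_lt with h | h
          · rw [← h]
            exact evalRight g 0 fun B hB => hgt B hB
          · exact hgt A h
        obtain ⟨f, q, hfq⟩ := ih (n - 1) (by omega) g hdg hgpos
        exact ⟨q, X * f, by rw [hg, hfq]; ring⟩
      · -- positive real root: double root
        obtain ⟨g, hg⟩ := dvd_iff_isRoot.mpr hr
        have hgne : g ≠ 0 := fun h => hp0 (by simp [hg, h])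
        have hgt : ∀ A, z.re < A → 0 ≤ g.eval A := by
          intro A hA
          have h2 := hpos A (by linarith)
          rw [hg] at h2
          simp only [eval_mul, eval_sub, eval_X, eval_C] at h2
          exact nn _ _ h2 (by linarith)
        have hlt : ∀ A, 0 ≤ A → A < z.re → g.eval A ≤ 0 := by
          intro A h0 hA
          have h2 := hpos A h0
          rw [hg] at h2
          simp only [eval_mul, eval_sub, eval_X, eval_C] at h2
          nlinarith
        have hgr : g.eval z.re = 0 :=
          le_antisymm (evalLeft g z.re hrpos hlt) (evalRight g z.re hgt)
        obtain ⟨h, hh⟩ := dvd_iff_isRoot.mpr hgr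
        have hp2 : p = (X - C z.re) ^ 2 * h := by rw [hg, hh]; ring
        have hhne : h ≠ 0 := fun h0 => hp0 (by simp [hp2, h0])
        have hdh : h.natDegree ≤ n - 1 := by
          have hsq : ((X - C z.re) ^ 2 : Polynomial ℝ) ≠ 0 :=
            pow_ne_zero _ (X_sub_C_ne_zero z.re)
          have hmul := natDegree_mul hsq hhne
          rw [← hp2, natDegree_pow, natDegree_X_sub_C] at hmul
          omega
        have hht : ∀ A, 0 ≤ A → A ≠ z.re → 0 ≤ h.eval A := by
          intro A hA hAne
          have h2 := hpos A hA
          rw [hp2] at h2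
          simp only [eval_mul, eval_pow, eval_sub, eval_X, eval_C] at h2
          exact nn _ _ h2 (sqpos _ (sub_ne_zero.mpr hAne))
        have hhpos : ∀ A, 0 ≤ A → 0 ≤ h.eval A := by
          intro A hA
          rcases eq_or_ne A z.re with hAr | hAr
          · rw [hAr]
            exact evalRight _ z.re fun B hB => hht B (by linarith) (by linarith)
          · exact hht A hA hAr
        obtain ⟨f, q, hfq⟩ := ih (n - 1) (by omega) h hdh hhpos
        exact ⟨(X - C z.re) * f, (X - C z.re) * q, by rw [hp2, hfq]; ring⟩
    · -- nonreal root: quadratic factor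
      set c := z.re with hc0
      set e := z.im with he0
      set Q : Polynomial ℝ := X ^ 2 - C (2 * c) * X + C (c ^ 2 + e ^ 2) with hQdef
      have hQm : Q.Monic := by
        have hrw : Q = X ^ 2 + (C (-(2 * c)) * X + C (c ^ 2 + e ^ 2)) := by
          rw [hQdef, map_neg]; ring
        rw [hrw]
        refine monic_X_pow_add (lt_of_le_of_lt degree_linear_le ?_)
        norm_num
      have hQdeg : Q.natDegree = 2 := by
        have : Q = C 1 * X ^ 2 + C (-(2 * c)) * X + C (c ^ 2 + e ^ 2) := by
          rw [hQdef, C_1, map_neg]; ring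
        rw [this]
        exact natDegree_quadratic one_ne_zero
      have hmod := modByMonic_add_div p Q
      have hdeglt : (p %ₘ Q).degree < Q.degree := degree_modByMonic_lt p hQm
      have hQz : aeval z Q = 0 := by
        have hzz : (c : ℂ) + (e : ℂ) * Complex.I = z := Complex.re_add_im z
        rw [hQdef]
        simp only [map_add, map_sub, map_mul, map_pow, aeval_X, aeval_C]
        rw [← hzz]
        push_cast
        ring_nf
        simp [Complex.I_sq]
        ring
      have hrz : aeval z (p %ₘ Q) = 0 := by
        have h := congrArg (aeval z) hmod
        rw [map_add, map_mul, hQz, hza] at h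
        simpa using h
      have hr0 : p %ₘ Q = 0 := by
        by_contra hne
        have hrdeg : (p %ₘ Q).degree ≤ 1 := by
          rw [degree_eq_natDegree hne] at hdeglt ⊢
          rw [degree_eq_natDegree hQm.ne_zero, hQdeg] at hdeglt
          exact_mod_cast (by exact_mod_cast Nat.lt_succ_iff.mp (by exact_mod_cast hdeglt) : (p %ₘ Q).natDegree ≤ 1)
        have req := eq_X_add_C_of_degree_le_one hrdeg
        rw [req] at hrz
        simp only [map_add, map_mul, aeval_X, aeval_C] at hrz
        have him2 : ((p %ₘ Q).coeff 1) * z.im = 0 := by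
          have := congrArg Complex.im hrz
          simpa [Complex.add_im, Complex.mul_im] using this
        have h1 : (p %ₘ Q).coeff 1 = 0 := by
          rcases mul_eq_zero.mp him2 with h | h
          · exact h
          · exact absurd h him
        have h0 : (p %ₘ Q).coeff 0 = 0 := by
          rw [h1] at hrz
          simpa using hrz
        rw [req, h1, h0] at hne
        simp at hne
      set g := p /ₘ Q with hgdef
      have hpQ : p = Q * g := by rw [← hmod, hr0]; ring
      have hgne : g ≠ 0 := fun h0 => hp0 (by simp [hpQ, h0])
      have hdg : g.natDegree ≤ n - 1 := by
        have hmul := natDegree_mul hQm.ne_zero hgne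
        rw [← hpQ, hQdeg] at hmul
        omega
      have hQpos : ∀ A : ℝ, 0 < Q.eval A := by
        intro A
        rw [hQdef]
        simp only [eval_add, eval_sub, eval_pow, eval_mul, eval_X, eval_C]
        nlinarith [sq_nonneg (A - c), sqpos e him]
      have hgpos : ∀ A, 0 ≤ A → 0 ≤ g.eval A := by
        intro A hA
        have h2 := hpos A hA
        rw [hpQ, eval_mul] at h2
        exact nn _ _ h2 (hQpos A)
      obtain ⟨f, q, hfq⟩ := ih (n - 1) (by omega) g hdg hgpos
      set t := Real.sqrt (c ^ 2 + e ^ 2) with ht0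
      have ht : t ^ 2 = c ^ 2 + e ^ 2 := Real.sq_sqrt (by positivity)
      have htnn : 0 ≤ t := Real.sqrt_nonneg _
      have hct : c ≤ t := by nlinarith [sqpos e him]
      set a0 := Real.sqrt (2 * t - 2 * c) with ha0
      have ha : a0 ^ 2 = 2 * t - 2 * c := Real.sq_sqrt (by linarith)
      have h1 : (C a0) ^ 2 = 2 * C t - C (2 * c) := by
        rw [← C_pow, ha]
        simp only [C_sub, C_mul, map_ofNat]
      have h2 : (C t) ^ 2 = C (c ^ 2 + e ^ 2) := by rw [← C_pow, ht]
      have hQS : Q = X * (C a0) ^ 2 + (X - C t) ^ 2 := by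
        rw [hQdef]
        linear_combination (-(X : Polynomial ℝ)) * h1 - h2
      refine ⟨C a0 * q + (X - C t) * f, (X - C t) * q - X * C a0 * f, ?_⟩
      rw [hpQ, hfq, hQS, sqmul (C a0) (X - C t) f q]

private lemma degbound (m : ℕ) (p f q : Polynomial ℝ) (hdeg : p.natDegree ≤ 2 * m + 1)
    (hfq : p = X * f ^ 2 + q ^ 2) : f.natDegree ≤ m ∧ q.natDegree ≤ m := by
  by_cases hf : f = 0
  · refine ⟨by simp [hf], ?_⟩
    by_cases hq : q = 0
    · simp [hq]
    · have hp : p = q ^ 2 := by rw [hfq, hf]; ring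
      have : p.natDegree = 2 * q.natDegree := by rw [hp, natDegree_pow]
      omega
  by_cases hq : q = 0
  · have hp : p = X * f ^ 2 := by rw [hfq, hq]; ring
    have : p.natDegree = 2 * f.natDegree + 1 := by
      rw [hp, natDegree_mul X_ne_zero (pow_ne_zero _ hf), natDegree_X, natDegree_pow]
      ring
    constructor
    · omega
    · simp [hq]
  have hXf : (X * f ^ 2 : Polynomial ℝ).natDegree = 2 * f.natDegree + 1 := by
    rw [natDegree_mul X_ne_zero (pow_ne_zero _ hf), natDegree_X, natDegree_pow]
    ring
  have hq2 : (q ^ 2 : Polynomial ℝ).natDegree = 2 * q.natDegree := natDegree_pow q 2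
  rcases lt_trichotomy (2 * q.natDegree) (2 * f.natDegree + 1) with hlt | heq | hgt
  · have hpd : p.natDegree = 2 * f.natDegree + 1 := by
      rw [hfq, natDegree_add_eq_left_of_natDegree_lt (by omega : (q ^ 2 : Polynomial ℝ).natDegree < (X * f ^ 2 : Polynomial ℝ).natDegree), hXf]
    omega
  · omega
  · have hpd : p.natDegree = 2 * q.natDegree := by
      rw [hfq, natDegree_add_eq_right_of_natDegree_lt (by omega : (X * f ^ 2 : Polynomial ℝ).natDegree < (q ^ 2 : Polynomial ℝ).natDegree), hq2]
    omega

/-- Markov–Lukács, odd case: a polynomial of degree ≤ 2m+1 that is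
nonnegative on [0,∞) can be written as A·f(A)² + q(A)² with
deg f ≤ m and deg q ≤ m. -/
theorem stmt_2 (m : ℕ) (p : Polynomial ℝ)
    (hdeg : p.natDegree ≤ 2 * m + 1)
    (hpos : ∀ A : ℝ, 0 ≤ A → 0 ≤ p.eval A) :
    ∃ f q : Polynomial ℝ, f.natDegree ≤ m ∧ q.natDegree ≤ m ∧
      p = Polynomial.X * f ^ 2 + q ^ 2 := by
  obtain ⟨f, q, hfq⟩ := key (2 * m + 1) p hdeg hpos
  obtain ⟨hf, hq⟩ := degbound m p f q hdeg hfq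
  exact ⟨f, q, hf, hq, hfq⟩
end

section
/- Let c = (c_0, ..., c_{2k+1}) be a vector of real numbers such that the Hankel matrix H_k(c) = (c_{i+j})_{0≤i,j≤k} is positive semidefinite, the shifted Hankel matrix B_k(c) = (c_{i+j+1})_{0≤i,j≤k} is positive semidefinite, and the vector (c_{k+1}, ..., c_{2k+1}) lies in the range of H_k(c). Then there exists a finite positive Borel measure μ on [0,∞) with ∫ A^j dμ = c_j for all j = 0, ..., 2k+1. Conversely, if such a measure exists, all three conditions hold. -/
open MeasureTheory

lemma integrable_of_dirac {f : ℝ → ℝ} (hf : Measurable f) (a : ℝ) :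
    Integrable f (Measure.dirac a) := by
  refine ⟨hf.aestronglyMeasurable, ?_⟩
  rw [HasFiniteIntegral, lintegral_dirac]
  exact ENNReal.coe_lt_top

local notation "⟪" x ", " y "⟫" => @inner ℝ _ _ x y

lemma spectral_moments {E : Type*} [NormedAddCommGroup E] [InnerProductSpace ℝ E]
    [FiniteDimensional ℝ E]
    (T : E →ₗ[ℝ] E) (hT : T.IsSymmetric) (hpos : ∀ x : E, 0 ≤ ⟪T x, x⟫) (e : E) :
    ∃ μ : Measure ℝ, IsFiniteMeasure μ ∧ μ (Set.Iio 0) = 0 ∧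
      ∀ j : ℕ, Integrable (fun A : ℝ => A ^ j) μ ∧ (∫ A, A ^ j ∂μ) = ⟪(T ^ j) e, e⟫ := by
  set n := Module.finrank ℝ E with hn
  have hrank : Module.finrank ℝ E = n := rfl
  set b := hT.eigenvectorBasis hrank with hb
  set lam := hT.eigenvalues hrank with hlam
  have hlam_nonneg : ∀ i, 0 ≤ lam i := by
    intro i
    have h1 : T (b i) = lam i • b i := hT.apply_eigenvectorBasis hrank i
    have h2 := hpos (b i)
    rw [h1, real_inner_smul_left, real_inner_self_eq_norm_sq, b.orthonormal.1 i] at h2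
    simpa using h2
  refine ⟨∑ i : Fin n, ENNReal.ofReal (⟪e, b i⟫ ^ 2) • Measure.dirac (lam i), ?_, ?_, ?_⟩
  · constructor
    rw [Measure.coe_finset_sum, Finset.sum_apply]
    refine ENNReal.sum_lt_top.2 fun i _ => ?_
    simp only [Measure.smul_apply, smul_eq_mul]
    exact ENNReal.mul_lt_top ENNReal.ofReal_lt_top (measure_lt_top _ _)
  · rw [Measure.coe_finset_sum, Finset.sum_apply]
    refine Finset.sum_eq_zero fun i _ => ?_
    simp only [Measure.smul_apply, Measure.dirac_apply' _ measurableSet_Iio]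
    have hni : lam i ∉ Set.Iio 0 := not_lt.2 (hlam_nonneg i)
    rw [Set.indicator_of_notMem hni]
    simp
  · intro j
    have hint : ∀ i : Fin n,
        Integrable (fun A : ℝ => A ^ j)
          (ENNReal.ofReal (⟪e, b i⟫ ^ 2) • Measure.dirac (lam i)) := fun i =>
      (integrable_of_dirac (measurable_id.pow_const j) _).smul_measure ENNReal.ofReal_ne_top
    constructor
    · exact integrable_finset_sum_measure.2 fun i _ => hint i
    · rw [integral_finset_sum_measure fun i _ => hint i]
      clear hint
      have hTj : ∀ (j : ℕ) (x y : E), ⟪(T ^ j) x, y⟫ = ⟪x, (T ^ j) y⟫ := by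
        intro j
        induction j with
        | zero => intro x y; simp
        | succ m ih =>
          intro x y
          have hc : T ((T ^ m) y) = (T ^ m) (T y) := by
            rw [← Module.End.mul_apply, ← pow_succ', pow_succ, Module.End.mul_apply]
          rw [pow_succ, Module.End.mul_apply, Module.End.mul_apply, ih, hT, hc]
      have hTb : ∀ i, (T ^ j) (b i) = (lam i ^ j) • b i := by
        intro i
        induction j with
        | zero => simp
        | succ m ih =>
          rw [pow_succ', Module.End.mul_apply, ih, _root_.map_smul,
            hT.apply_eigenvectorBasis hrank i, smul_smul]
          norm_num
          rw [← hlam, ← hb, ← pow_succ]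
      have key : ⟪(T ^ j) e, e⟫ = ∑ i : Fin n, ⟪e, b i⟫ ^ 2 * lam i ^ j := by
        rw [real_inner_comm, ← b.sum_inner_mul_inner e ((T ^ j) e)]
        refine Finset.sum_congr rfl fun i _ => ?_
        rw [← hTj j, hTb i, real_inner_smul_left]
        rw [real_inner_comm (b i) e]; ring
      rw [key]
      refine Finset.sum_congr rfl fun i _ => ?_
      rw [integral_smul_measure, integral_dirac, ENNReal.toReal_ofReal (sq_nonneg _)]
      simp [smul_eq_mul]

open Matrix

section Hankel
variable {k : ℕ}

def Sm (k : ℕ) (u : Fin (k+1) → ℝ) : Matrix (Fin (k+1)) (Fin (k+1)) ℝ :=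
  Matrix.of fun i j => (if (i:ℕ) = (j:ℕ) + 1 then (1:ℝ) else 0) + (if (j:ℕ) = k then u i else 0)

lemma Hmul_S (c : ℕ → ℝ) (u : Fin (k+1) → ℝ)
    (hu : (Matrix.of fun i j : Fin (k+1) => c ((i:ℕ)+(j:ℕ))) *ᵥ u
      = fun i : Fin (k+1) => c (k+1+(i:ℕ))) :
    (Matrix.of fun i j : Fin (k+1) => c ((i:ℕ)+(j:ℕ))) * Sm k u
      = Matrix.of fun i j : Fin (k+1) => c ((i:ℕ)+(j:ℕ)+1) := by
  ext i j
  rw [Matrix.mul_apply]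
  simp only [Matrix.of_apply, Sm, mul_add]
  rw [Finset.sum_add_distrib]
  by_cases hj : (j:ℕ) = k
  · have h1 : ∀ l : Fin (k+1),
        (c ((i:ℕ)+(l:ℕ)) * if (l:ℕ) = (j:ℕ)+1 then (1:ℝ) else 0) = 0 := by
      intro l
      rw [if_neg, mul_zero]
      have := l.isLt; omega
    rw [Finset.sum_eq_zero (fun l _ => h1 l), zero_add]
    simp only [hj, if_true]
    have h2 := congrFun hu i
    simp only [Matrix.mulVec, dotProduct, Matrix.of_apply] at h2
    rw [h2]
    congr 1
    omega
  · have hjk : (j:ℕ) < k := by have := j.isLt; omega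
    have h2 : ∀ l : Fin (k+1), (c ((i:ℕ)+(l:ℕ)) * if (j:ℕ) = k then u l else 0) = 0 := by
      intro l; rw [if_neg hj, mul_zero]
    rw [Finset.sum_eq_zero (fun l _ => h2 l), add_zero]
    have hl0 : ((j:ℕ)+1) < k + 1 := by omega
    rw [Finset.sum_eq_single (⟨(j:ℕ)+1, hl0⟩ : Fin (k+1))]
    · rw [if_pos rfl, mul_one]
      have hval : ((⟨(j:ℕ)+1, hl0⟩ : Fin (k+1)) : ℕ) = (j:ℕ)+1 := rfl
      rw [hval]
      exact congrArg c (by omega)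
    · intro l _ hl
      rw [if_neg, mul_zero]
      intro hc
      exact hl (Fin.ext hc)
    · intro h; exact absurd (Finset.mem_univ _) h

lemma Sm_single_lt (u : Fin (k+1) → ℝ) (a : ℕ) (ha : a < k) :
    Sm k u *ᵥ Pi.single (⟨a, by omega⟩ : Fin (k+1)) 1
      = Pi.single (⟨a+1, by omega⟩ : Fin (k+1)) 1 := by
  funext i
  rw [Matrix.mulVec_single]
  simp only [Pi.smul_apply, Matrix.col_apply, op_smul_eq_mul, mul_one]
  simp only [Sm, Matrix.of_apply, Pi.single_apply, Fin.ext_iff]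
  have hak : a ≠ k := Nat.ne_of_lt ha
  rw [if_neg hak]
  by_cases h : (i:ℕ) = a + 1 <;> simp [h]

lemma Sm_single_k (u : Fin (k+1) → ℝ) :
    Sm k u *ᵥ Pi.single (⟨k, Nat.lt_succ_self k⟩ : Fin (k+1)) 1 = u := by
  funext i
  rw [Matrix.mulVec_single]
  simp only [Pi.smul_apply, Matrix.col_apply, op_smul_eq_mul, mul_one]
  simp only [Sm, Matrix.of_apply]
  have h1 : (i:ℕ) ≠ k + 1 := by have := i.isLt; omega
  rw [if_neg h1]
  simp

end Hankel


def QW (k : ℕ) (K : Submodule ℝ (Fin (k+1) → ℝ)) : Type := (Fin (k+1) → ℝ) ⧸ K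

instance (k : ℕ) (K : Submodule ℝ (Fin (k+1) → ℝ)) : AddCommGroup (QW k K) :=
  Submodule.Quotient.addCommGroup K

noncomputable instance (k : ℕ) (K : Submodule ℝ (Fin (k+1) → ℝ)) : Module ℝ (QW k K) :=
  Submodule.Quotient.module K

instance (k : ℕ) (K : Submodule ℝ (Fin (k+1) → ℝ)) : FiniteDimensional ℝ (QW k K) :=
  inferInstanceAs (FiniteDimensional ℝ ((Fin (k+1) → ℝ) ⧸ K))

lemma forward (k : ℕ) (c : ℕ → ℝ)
    (hH : (Matrix.of fun i j : Fin (k + 1) => c ((i : ℕ) + (j : ℕ))).PosSemidef)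
    (hB : (Matrix.of fun i j : Fin (k + 1) => c ((i : ℕ) + (j : ℕ) + 1)).PosSemidef)
    (u : Fin (k + 1) → ℝ)
    (hu : (Matrix.of fun i j : Fin (k + 1) => c ((i : ℕ) + (j : ℕ))).mulVec u =
          fun i : Fin (k + 1) => c (k + 1 + (i : ℕ))) :
    ∃ μ : Measure ℝ, IsFiniteMeasure μ ∧ μ (Set.Iio 0) = 0 ∧
       ∀ j ≤ 2 * k + 1,
         Integrable (fun A : ℝ => A ^ j) μ ∧ (∫ A, A ^ j ∂μ) = c j := by
  classical
  set H : Matrix (Fin (k+1)) (Fin (k+1)) ℝ :=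
    Matrix.of fun i j : Fin (k+1) => c ((i:ℕ)+(j:ℕ)) with hHdef
  set B : Matrix (Fin (k+1)) (Fin (k+1)) ℝ :=
    Matrix.of fun i j : Fin (k+1) => c ((i:ℕ)+(j:ℕ)+1) with hBdef
  set S : Matrix (Fin (k+1)) (Fin (k+1)) ℝ := Sm k u with hSdef
  have hHS : H * S = B := Hmul_S c u hu
  have hHsym : ∀ (a b : Fin (k+1) → ℝ), a ⬝ᵥ H *ᵥ b = b ⬝ᵥ H *ᵥ a := by
    intro a b
    simp only [dotProduct, Matrix.mulVec, hHdef, Matrix.of_apply, Finset.mul_sum]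
    rw [Finset.sum_comm]
    refine Finset.sum_congr rfl fun i _ => Finset.sum_congr rfl fun j _ => ?_
    rw [add_comm (j:ℕ) (i:ℕ)]; ring
  have hBsym : ∀ (a b : Fin (k+1) → ℝ), a ⬝ᵥ B *ᵥ b = b ⬝ᵥ B *ᵥ a := by
    intro a b
    simp only [dotProduct, Matrix.mulVec, hBdef, Matrix.of_apply, Finset.mul_sum]
    rw [Finset.sum_comm]
    refine Finset.sum_congr rfl fun i _ => Finset.sum_congr rfl fun j _ => ?_
    rw [add_comm (j:ℕ) (i:ℕ)]; ring
  set K : Submodule ℝ (Fin (k+1) → ℝ) := LinearMap.ker H.mulVecLin with hKdef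
  have hmemK : ∀ x : Fin (k+1) → ℝ, x ∈ K ↔ H *ᵥ x = 0 := by
    intro x
    rw [hKdef, LinearMap.mem_ker, Matrix.mulVecLin_apply]
  have hSK : ∀ x ∈ K, S *ᵥ x ∈ K := by
    intro x hx
    have hx' : H *ᵥ x = 0 := (hmemK x).mp hx
    rw [hmemK, Matrix.mulVec_mulVec, hHS]
    refine (hB.dotProduct_mulVec_zero_iff x).mp ?_
    have : x ⬝ᵥ B *ᵥ x = (S *ᵥ x) ⬝ᵥ H *ᵥ x := by
      rw [← hHS, ← Matrix.mulVec_mulVec, hHsym]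
    simpa [this, hx'] using this
  -- the quotient inner product space
  set φ₀ : (Fin (k+1) → ℝ) →ₗ[ℝ] (Fin (k+1) → ℝ) →ₗ[ℝ] ℝ :=
    LinearMap.mk₂ ℝ (fun a b => a ⬝ᵥ H *ᵥ b)
      (fun a a' b => by simp [add_dotProduct])
      (fun r a b => by simp [smul_dotProduct])
      (fun a b b' => by simp [Matrix.mulVec_add, dotProduct_add])
      (fun r a b => by simp [Matrix.mulVec_smul, dotProduct_smul]) with hφ₀def
  have hφ₀app : ∀ a b : Fin (k+1) → ℝ, φ₀ a b = a ⬝ᵥ H *ᵥ b := by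
    intro a b
    rw [hφ₀def, LinearMap.mk₂_apply]
  have hker2 : ∀ x : Fin (k+1) → ℝ, K ≤ LinearMap.ker (φ₀ x) := by
    intro x y hy
    rw [LinearMap.mem_ker, hφ₀app, (hmemK y).mp hy, dotProduct_zero]
  set φ₂ : (Fin (k+1) → ℝ) →ₗ[ℝ] (QW k K) →ₗ[ℝ] ℝ :=
    { toFun := fun x => K.liftQ (φ₀ x) (hker2 x)
      map_add' := by
        intro x y
        refine Submodule.linearMap_qext _ (LinearMap.ext fun z => ?_)
        show φ₀ (x + y) z = φ₀ x z + φ₀ y z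
        rw [map_add, LinearMap.add_apply]
      map_smul' := by
        intro r x
        refine Submodule.linearMap_qext _ (LinearMap.ext fun z => ?_)
        show φ₀ (r • x) z = r • φ₀ x z
        rw [hφ₀app, hφ₀app, smul_dotProduct] } with hφ₂def
  have hφ₂mk : ∀ x y : Fin (k+1) → ℝ,
      φ₂ x (Submodule.Quotient.mk y) = x ⬝ᵥ H *ᵥ y := by
    intro x y
    exact hφ₀app x y
  set φQ : (QW k K) →ₗ[ℝ] (QW k K) →ₗ[ℝ] ℝ :=
    K.liftQ φ₂ (by
      intro x hx
      refine Submodule.linearMap_qext _ (LinearMap.ext fun z => ?_)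
      show φ₂ x (Submodule.Quotient.mk z) = 0
      rw [hφ₂mk, hHsym, (hmemK x).mp hx, dotProduct_zero]) with hφQdef
  have hφmk : ∀ x y : Fin (k+1) → ℝ,
      φQ (Submodule.Quotient.mk x) (Submodule.Quotient.mk y) = x ⬝ᵥ H *ᵥ y := by
    intro x y
    exact hφ₂mk x y
  have hquadH : ∀ x : Fin (k+1) → ℝ, 0 ≤ x ⬝ᵥ H *ᵥ x := by
    intro x
    simpa using (Matrix.posSemidef_iff_dotProduct_mulVec.mp hH).2 x
  have hquadB : ∀ x : Fin (k+1) → ℝ, 0 ≤ x ⬝ᵥ B *ᵥ x := by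
    intro x
    simpa using (Matrix.posSemidef_iff_dotProduct_mulVec.mp hB).2 x
  letI core : InnerProductSpace.Core ℝ (QW k K) :=
    { inner := fun p q => φQ p q
      conj_inner_symm := by
        intro p q
        obtain ⟨x, rfl⟩ := Submodule.Quotient.mk_surjective K p
        obtain ⟨y, rfl⟩ := Submodule.Quotient.mk_surjective K q
        simp only [starRingEnd_apply, star_trivial]
        show φQ _ _ = φQ _ _
        rw [hφmk, hφmk, hHsym]
      re_inner_nonneg := by
        intro p
        obtain ⟨x, rfl⟩ := Submodule.Quotient.mk_surjective K p
        have h := hquadH x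
        rw [← hφmk x x] at h
        exact h
      add_left := by
        intro p q r
        show φQ (p + q) r = φQ p r + φQ q r
        rw [map_add, LinearMap.add_apply]
      smul_left := by
        intro p q r
        show φQ (r • p) q = (starRingEnd ℝ) r * φQ p q
        rw [LinearMap.map_smul φQ r p, LinearMap.smul_apply]
        simp [starRingEnd_apply, star_trivial]
      definite := by
        intro p hp
        obtain ⟨x, rfl⟩ := Submodule.Quotient.mk_surjective K p
        have hx : x ⬝ᵥ H *ᵥ x = 0 := by
          rw [← hφmk x x]
          exact hp
        have hx0 : H *ᵥ x = 0 := by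
          refine (hH.dotProduct_mulVec_zero_iff x).mp ?_
          simpa using hx
        exact (Submodule.Quotient.mk_eq_zero (p := K) (x := x)).mpr ((hmemK x).mpr hx0) }
  letI : NormedAddCommGroup (QW k K) := core.toNormedAddCommGroup
  letI : InnerProductSpace ℝ (QW k K) := InnerProductSpace.ofCore core.toCore
  set M : (QW k K) →ₗ[ℝ] (QW k K) :=
    K.mapQ K S.mulVecLin (by
      intro x hx
      simpa using hSK x hx) with hMdef
  have hMmk : ∀ x : Fin (k+1) → ℝ,
      M (Submodule.Quotient.mk x) = Submodule.Quotient.mk (S *ᵥ x) := by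
    intro x
    rfl
  have hcross : ∀ x y : Fin (k+1) → ℝ, (S *ᵥ x) ⬝ᵥ H *ᵥ y = x ⬝ᵥ B *ᵥ y := by
    intro x y
    rw [hHsym, Matrix.mulVec_mulVec, hHS, hBsym]
  have hMsym : M.IsSymmetric := by
    intro p q
    obtain ⟨x, rfl⟩ := Submodule.Quotient.mk_surjective K p
    obtain ⟨y, rfl⟩ := Submodule.Quotient.mk_surjective K q
    show φQ _ _ = φQ _ _
    rw [hMmk, hMmk, hφmk, hφmk, hcross, Matrix.mulVec_mulVec, hHS]
  have hMpos : ∀ p, (0:ℝ) ≤ inner ℝ (M p) p := by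
    intro p
    obtain ⟨x, rfl⟩ := Submodule.Quotient.mk_surjective K p
    show (0:ℝ) ≤ φQ _ _
    rw [hMmk, hφmk, hcross]
    exact hquadB x
  obtain ⟨μ, h1, h2, h3⟩ := spectral_moments M hMsym hMpos
    (Submodule.Quotient.mk (Pi.single (⟨0, by omega⟩ : Fin (k+1)) (1:ℝ)))
  refine ⟨μ, h1, h2, fun j hj => ⟨(h3 j).1, ?_⟩⟩
  rw [(h3 j).2]
  have hinner' : ∀ p q : Fin (k+1) → ℝ,
      (@inner ℝ (QW k K) _ (Submodule.Quotient.mk p) (Submodule.Quotient.mk q))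
        = p ⬝ᵥ H *ᵥ q := by
    intro p q
    exact hφmk p q
  have hMa : ∀ a : ℕ, (ha : a ≤ k) →
      (M^a) (Submodule.Quotient.mk (Pi.single (⟨0, by omega⟩ : Fin (k+1)) (1:ℝ)))
        = Submodule.Quotient.mk (Pi.single (⟨a, by omega⟩ : Fin (k+1)) (1:ℝ)) := by
    intro a
    induction a with
    | zero =>
      intro _
      rw [pow_zero]; rfl
    | succ a ih =>
      intro ha
      rw [pow_succ']; erw [Module.End.mul_apply]; rw [ih (by omega), hMmk, hSdef,
        Sm_single_lt u a (by omega)]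
  have hMk : (M^(k+1)) (Submodule.Quotient.mk (Pi.single (⟨0, by omega⟩ : Fin (k+1)) (1:ℝ)))
      = Submodule.Quotient.mk u := by
    rw [pow_succ']; erw [Module.End.mul_apply]; rw [hMa k le_rfl, hMmk, hSdef, Sm_single_k u]
  have hsingle : ∀ (a b : ℕ) (ha : a < k+1) (hb : b < k+1),
      (Pi.single (⟨a,ha⟩:Fin (k+1)) (1:ℝ)) ⬝ᵥ H *ᵥ (Pi.single (⟨b,hb⟩:Fin (k+1)) (1:ℝ))
        = c (a+b) := by
    intro a b ha hb
    simp [Matrix.mulVec_single, single_dotProduct, hHdef]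
  by_cases hjk : j ≤ k
  · rw [hMa j hjk, hinner', hsingle j 0 (by omega) (by omega)]
    exact congrArg c (by omega)
  · by_cases hj2 : j = 2*k+1
    · subst hj2
      have hsplit : 2*k+1 = (k+1)+k := by omega
      rw [hsplit, pow_add]; erw [Module.End.mul_apply, hMsym.pow (k+1) _ _]; rw [hMa k le_rfl, hMk,
        hinner', hu, single_dotProduct, one_mul]
    · have hsplit : j = (j-k) + k := by omega
      rw [hsplit, pow_add]; erw [Module.End.mul_apply, hMsym.pow (j-k) _ _]; rw [hMa k le_rfl,
        hMa (j-k) (by omega), hinner', hsingle k (j-k) (by omega) (by omega)]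
      exact congrArg c (by omega)


section Backward
variable {k : ℕ} {c : ℕ → ℝ} {μ : Measure ℝ}

lemma expand_sq {k : ℕ} (δ : ℕ) (x : Fin (k+1) → ℝ) (A : ℝ) :
    A ^ δ * (∑ i : Fin (k+1), x i * A ^ (i:ℕ)) ^ 2 =
      ∑ i : Fin (k+1), ∑ j : Fin (k+1), (x i * x j) * A ^ ((i:ℕ) + (j:ℕ) + δ) := by
  rw [pow_two, Finset.sum_mul_sum, Finset.mul_sum]
  refine Finset.sum_congr rfl fun i _ => ?_
  rw [Finset.mul_sum]
  refine Finset.sum_congr rfl fun j _ => ?_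
  rw [pow_add, pow_add]; ring

lemma quad_key [IsFiniteMeasure μ]
    (hmom : ∀ j ≤ 2*k+1, Integrable (fun A : ℝ => A ^ j) μ ∧ (∫ A, A^j ∂μ) = c j)
    (δ : ℕ) (hδ : δ ≤ 1) (x : Fin (k+1) → ℝ) :
    (∫ A, A ^ δ * (∑ i : Fin (k+1), x i * A ^ (i:ℕ)) ^ 2 ∂μ) =
      x ⬝ᵥ (Matrix.of fun i j : Fin (k+1) => c ((i:ℕ) + (j:ℕ) + δ)) *ᵥ x := by
  have hint : ∀ m ≤ 2*k+1, Integrable (fun A : ℝ => A^m) μ := fun m hm => (hmom m hm).1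
  have expand := expand_sq δ x
  have hle : ∀ (i j : Fin (k+1)), (i:ℕ) + (j:ℕ) + δ ≤ 2*k+1 := by
    intro i j; have := i.isLt; have := j.isLt; omega
  calc (∫ A, A ^ δ * (∑ i : Fin (k+1), x i * A ^ (i:ℕ)) ^ 2 ∂μ)
      = ∫ A, ∑ i : Fin (k+1), ∑ j : Fin (k+1), (x i * x j) * A ^ ((i:ℕ)+(j:ℕ)+δ) ∂μ := by
        simp_rw [expand]
    _ = ∑ i : Fin (k+1), ∑ j : Fin (k+1), ∫ A, (x i * x j) * A ^ ((i:ℕ)+(j:ℕ)+δ) ∂μ := by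
        rw [integral_finset_sum]
        · exact Finset.sum_congr rfl fun i _ => integral_finset_sum _
            (fun j _ => ((hint _ (hle i j)).const_mul _))
        · exact fun i _ => integrable_finset_sum _ fun j _ => ((hint _ (hle i j)).const_mul _)
    _ = ∑ i : Fin (k+1), ∑ j : Fin (k+1), (x i * x j) * c ((i:ℕ)+(j:ℕ)+δ) := by
        refine Finset.sum_congr rfl fun i _ => Finset.sum_congr rfl fun j _ => ?_
        rw [integral_const_mul, (hmom _ (hle i j)).2]
    _ = x ⬝ᵥ (Matrix.of fun i j : Fin (k+1) => c ((i:ℕ) + (j:ℕ) + δ)) *ᵥ x := by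
        simp only [dotProduct, Matrix.mulVec, Matrix.of_apply, Finset.mul_sum]
        refine Finset.sum_congr rfl fun i _ => Finset.sum_congr rfl fun j _ => ?_
        ring

lemma back_H [IsFiniteMeasure μ]
    (hmom : ∀ j ≤ 2*k+1, Integrable (fun A : ℝ => A ^ j) μ ∧ (∫ A, A^j ∂μ) = c j) :
    (Matrix.of fun i j : Fin (k + 1) => c ((i : ℕ) + (j : ℕ))).PosSemidef := by
  rw [Matrix.posSemidef_iff_dotProduct_mulVec]
  constructor
  · ext i j
    simp [Matrix.conjTranspose_apply, add_comm]
  · intro x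
    have h0 := quad_key hmom 0 (by norm_num) x
    simp only [pow_zero, one_mul, add_zero] at h0
    rw [star_trivial, ← h0]
    exact integral_nonneg fun A => sq_nonneg _

lemma back_B [IsFiniteMeasure μ] (h0 : μ (Set.Iio 0) = 0)
    (hmom : ∀ j ≤ 2*k+1, Integrable (fun A : ℝ => A ^ j) μ ∧ (∫ A, A^j ∂μ) = c j) :
    (Matrix.of fun i j : Fin (k + 1) => c ((i : ℕ) + (j : ℕ) + 1)).PosSemidef := by
  have hae : ∀ᵐ A ∂μ, (0:ℝ) ≤ A := by
    rw [ae_iff]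
    convert h0 using 2
    ext a; simp [not_le]
  rw [Matrix.posSemidef_iff_dotProduct_mulVec]
  constructor
  · ext i j
    simp only [Matrix.conjTranspose_apply, Matrix.of_apply, star_trivial]
    congr 1; omega
  · intro x
    have h1 := quad_key hmom 1 le_rfl x
    simp only [pow_one] at h1
    rw [star_trivial, ← h1]
    refine integral_nonneg_of_ae ?_
    filter_upwards [hae] with A hA
    exact mul_nonneg hA (sq_nonneg _)

lemma back_range [IsFiniteMeasure μ]
    (hmom : ∀ j ≤ 2*k+1, Integrable (fun A : ℝ => A ^ j) μ ∧ (∫ A, A^j ∂μ) = c j) :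
    ∃ u : Fin (k + 1) → ℝ,
        (Matrix.of fun i j : Fin (k + 1) => c ((i : ℕ) + (j : ℕ))).mulVec u =
          fun i : Fin (k + 1) => c (k + 1 + (i : ℕ)) := by
  classical
  set H : Matrix (Fin (k+1)) (Fin (k+1)) ℝ :=
    Matrix.of fun i j : Fin (k + 1) => c ((i:ℕ) + (j:ℕ)) with hHdef
  have hH : H.PosSemidef := back_H hmom
  have hint : ∀ m ≤ 2*k+1, Integrable (fun A : ℝ => A^m) μ := fun m hm => (hmom m hm).1
  have hquad := quad_key hmom 0 (by norm_num)
  simp only [pow_zero, one_mul, add_zero] at hquad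
  set T : EuclideanSpace ℝ (Fin (k+1)) →ₗ[ℝ] EuclideanSpace ℝ (Fin (k+1)) :=
    Matrix.toEuclideanLin H with hT
  have hTapp : ∀ w : EuclideanSpace ℝ (Fin (k+1)),
      WithLp.equiv 2 _ (T w) = H *ᵥ (WithLp.equiv 2 _ w) := by
    intro w; rw [hT]; rfl
  have hmem : (WithLp.equiv 2 _).symm (fun i : Fin (k+1) => c (k+1+(i:ℕ))) ∈
      LinearMap.range T := by
    rw [← Submodule.orthogonal_orthogonal (LinearMap.range T),
      Submodule.mem_orthogonal]
    intro w hw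
    set w' : Fin (k+1) → ℝ := WithLp.equiv 2 _ w with hw'
    have hTw : (inner ℝ (T w) w : ℝ) = 0 := by
      exact hw (T w) (LinearMap.mem_range_self T w)
    have hdot : w' ⬝ᵥ H *ᵥ w' = 0 := by
      have h2 : (H *ᵥ w') ⬝ᵥ w' = 0 := by
        calc (H *ᵥ w') ⬝ᵥ w' = ∑ i, (T w) i * w i := by
              rw [← hTapp w]; rfl
          _ = inner ℝ (T w) w := by simp [PiLp.inner_apply, mul_comm]
          _ = 0 := hTw
      rw [dotProduct_comm] at h2
      exact h2
    have hker : H *ᵥ w' = 0 := by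
      refine (hH.dotProduct_mulVec_zero_iff w').mp ?_
      simpa using hdot
    have hzero : (∫ A, (∑ i : Fin (k+1), w' i * A ^ (i:ℕ)) ^ 2 ∂μ) = 0 := by
      rw [hquad w', hker, dotProduct_zero]
    have hsq_int : Integrable (fun A : ℝ => (∑ i : Fin (k+1), w' i * A ^ (i:ℕ)) ^ 2) μ := by
      have hfe : (fun A : ℝ => (∑ i : Fin (k+1), w' i * A ^ (i:ℕ)) ^ 2) =
          fun A : ℝ => ∑ i : Fin (k+1), ∑ j : Fin (k+1),
            (w' i * w' j) * A ^ ((i:ℕ) + (j:ℕ)) := by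
        funext A
        have := expand_sq 0 w' A
        simpa using this
      rw [hfe]
      refine integrable_finset_sum _ fun i _ => integrable_finset_sum _ fun j _ => ?_
      refine (hint _ ?_).const_mul _
      have := i.isLt; have := j.isLt; omega
    have hae0 : (fun A : ℝ => (∑ i : Fin (k+1), w' i * A ^ (i:ℕ))) =ᵐ[μ] 0 := by
      have h1 := (integral_eq_zero_iff_of_nonneg (fun A => sq_nonneg _) hsq_int).mp hzero
      filter_upwards [h1] with A hA
      have hA' : (∑ i : Fin (k+1), w' i * A ^ (i:ℕ)) ^ 2 = 0 := hA
      simpa using (pow_eq_zero_iff two_ne_zero).mp hA'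
    have hfin : ∑ i : Fin (k+1), w' i * c (k+1+(i:ℕ)) = 0 := by
      have hterm : ∀ i : Fin (k+1), (k+1+(i:ℕ)) ≤ 2*k+1 := fun i => by
        have := i.isLt; omega
      have h3 : ∑ i : Fin (k+1), w' i * c (k+1+(i:ℕ)) =
          ∫ A, ∑ i : Fin (k+1), w' i * A ^ (k+1+(i:ℕ)) ∂μ := by
        rw [integral_finset_sum _ fun i _ => ((hint _ (hterm i)).const_mul _)]
        exact Finset.sum_congr rfl fun i _ => by
          rw [integral_const_mul, (hmom _ (hterm i)).2]
      rw [h3]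
      have h4 : (fun A : ℝ => ∑ i : Fin (k+1), w' i * A ^ (k+1+(i:ℕ))) =ᵐ[μ] 0 := by
        filter_upwards [hae0] with A hA
        have hA' : (∑ i : Fin (k+1), w' i * A ^ (i:ℕ)) = 0 := hA
        have : ∑ i : Fin (k+1), w' i * A ^ (k+1+(i:ℕ)) =
            A ^ (k+1) * ∑ i : Fin (k+1), w' i * A ^ (i:ℕ) := by
          rw [Finset.mul_sum]
          exact Finset.sum_congr rfl fun i _ => by rw [pow_add]; ring
        simp [this, hA']
      rw [integral_congr_ae h4]
      simp
    -- conclude inner w vE = 0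
    have : (inner ℝ w ((WithLp.equiv 2 _).symm (fun i : Fin (k+1) => c (k+1+(i:ℕ)))) : ℝ) =
        ∑ i : Fin (k+1), w' i * c (k+1+(i:ℕ)) := by
      simp [PiLp.inner_apply]
      exact Finset.sum_congr rfl fun i _ => mul_comm _ _
    rw [this, hfin]
  obtain ⟨u, huT⟩ := hmem
  refine ⟨WithLp.equiv 2 _ u, ?_⟩
  have := congrArg (WithLp.equiv 2 _) huT
  rw [Equiv.apply_symm_apply] at this
  exact this

end Backward


/-- Truncated Stieltjes moment problem, odd case (Curto–Fialkow):
(c_0,…,c_{2k+1}) is a Stieltjes moment sequence iff the Hankel matrix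
H_k is PSD, the shifted Hankel matrix B_k is PSD, and
(c_{k+1},…,c_{2k+1}) lies in the range of H_k. -/
theorem stmt_5 (k : ℕ) (c : ℕ → ℝ) :
    ((Matrix.of fun i j : Fin (k + 1) => c ((i : ℕ) + (j : ℕ))).PosSemidef ∧
     (Matrix.of fun i j : Fin (k + 1) => c ((i : ℕ) + (j : ℕ) + 1)).PosSemidef ∧
     (∃ u : Fin (k + 1) → ℝ,
        (Matrix.of fun i j : Fin (k + 1) => c ((i : ℕ) + (j : ℕ))).mulVec u =
          fun i : Fin (k + 1) => c (k + 1 + (i : ℕ))))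
    ↔
    (∃ μ : Measure ℝ, IsFiniteMeasure μ ∧ μ (Set.Iio 0) = 0 ∧
       ∀ j ≤ 2 * k + 1,
         Integrable (fun A : ℝ => A ^ j) μ ∧ (∫ A, A ^ j ∂μ) = c j) := by
  constructor
  · rintro ⟨hH, hB, u, hu⟩
    exact forward k c hH hB u hu
  · rintro ⟨μ, hfin, h0, hmom⟩
    haveI := hfin
    exact ⟨back_H (fun j hj => hmom j hj), back_B h0 (fun j hj => hmom j hj),
      back_range (fun j hj => hmom j hj)⟩
end

section
/- Let c = (c_0, ..., c_{2k}) be real with the Hankel matrix H_k(c) = (c_{i+j})_{0≤i,j≤k} positive semidefinite, the shifted Hankel matrix B_{k-1}(c) = (c_{i+j+1})_{0≤i,j≤k-1} positive semidefinite, and (c_{k+1}, ..., c_{2k}) in the range of B_{k-1}(c). Then there exists a finite positive Borel measure on [0,∞) with moments c_0, ..., c_{2k}, and conversely. -/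
open Matrix MeasureTheory

section Aux
variable {k : ℕ} {c : ℕ → ℝ} {μ : Measure ℝ}

theorem mom_double (hmom : ∀ j ≤ 2*k, Integrable (fun A : ℝ => A ^ j) μ ∧ (∫ A, A ^ j ∂μ) = c j)
    (m : ℕ) (x y : Fin m → ℝ) (d : ℕ) (e f : Fin m → ℕ)
    (h : ∀ i j : Fin m, d + e i + f j ≤ 2*k) :
    Integrable (fun A : ℝ => A^d * (∑ i, x i * A ^ (e i)) * (∑ j, y j * A ^ (f j))) μ ∧
    (∫ A : ℝ, A^d * (∑ i, x i * A ^ (e i)) * (∑ j, y j * A ^ (f j)) ∂μ)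
      = ∑ i, ∑ j, x i * y j * c (d + e i + f j) := by
  have hfun : (fun A : ℝ => A^d * (∑ i, x i * A ^ (e i)) * (∑ j, y j * A ^ (f j)))
      = fun A : ℝ => ∑ i, ∑ j, (x i * y j) * A ^ (d + e i + f j) := by
    funext A
    rw [mul_assoc, Finset.sum_mul_sum, Finset.mul_sum]
    refine Finset.sum_congr rfl fun i _ => ?_
    rw [Finset.mul_sum]
    refine Finset.sum_congr rfl fun j _ => ?_
    rw [pow_add, pow_add]; ring
  have hint : ∀ i j : Fin m, Integrable (fun A : ℝ => (x i * y j) * A ^ (d + e i + f j)) μ :=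
    fun i j => ((hmom _ (h i j)).1).const_mul _
  constructor
  · rw [hfun]
    exact integrable_finset_sum _ fun i _ => integrable_finset_sum _ fun j _ => hint i j
  · rw [hfun, integral_finset_sum _ fun i _ => integrable_finset_sum _ fun j _ => hint i j]
    refine Finset.sum_congr rfl fun i _ => ?_
    rw [integral_finset_sum _ fun j _ => hint i j]
    refine Finset.sum_congr rfl fun j _ => ?_
    rw [MeasureTheory.integral_const_mul, (hmom _ (h i j)).2]

theorem mom_single (hmom : ∀ j ≤ 2*k, Integrable (fun A : ℝ => A ^ j) μ ∧ (∫ A, A ^ j ∂μ) = c j)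
    (m : ℕ) (x : Fin m → ℝ) (d : ℕ) (e : Fin m → ℕ)
    (h : ∀ i : Fin m, d + e i ≤ 2*k) :
    (∫ A : ℝ, A^d * (∑ i, x i * A ^ (e i)) ∂μ) = ∑ i, x i * c (d + e i) := by
  have hfun : (fun A : ℝ => A^d * (∑ i, x i * A ^ (e i)))
      = fun A : ℝ => ∑ i, x i * A ^ (d + e i) := by
    funext A
    rw [Finset.mul_sum]
    refine Finset.sum_congr rfl fun i _ => ?_
    rw [pow_add]; ring
  have hint : ∀ i : Fin m, Integrable (fun A : ℝ => x i * A ^ (d + e i)) μ :=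
    fun i => ((hmom _ (h i)).1).const_mul _
  rw [hfun, integral_finset_sum _ fun i _ => hint i]
  refine Finset.sum_congr rfl fun i _ => ?_
  rw [MeasureTheory.integral_const_mul, (hmom _ (h i)).2]

theorem symm_range {m : ℕ} (B : Matrix (Fin m) (Fin m) ℝ) (hB : B.IsHermitian)
    (v : Fin m → ℝ) (hv : ∀ w : Fin m → ℝ, B.mulVec w = 0 → v ⬝ᵥ w = 0) :
    ∃ u : Fin m → ℝ, B.mulVec u = v := by
  set T : EuclideanSpace ℝ (Fin m) →ₗ[ℝ] EuclideanSpace ℝ (Fin m) := Matrix.toEuclideanLin B with hT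
  have hsymm : T.IsSymmetric := (Matrix.isHermitian_iff_isSymmetric).mp hB
  have hrange : LinearMap.range T = (LinearMap.ker T)ᗮ := by
    have hle : LinearMap.range T ≤ (LinearMap.ker T)ᗮ := by
      rintro _ ⟨y, rfl⟩ z hz
      rw [← hsymm z y, LinearMap.mem_ker.mp hz]
      simp
    refine Submodule.eq_of_le_of_finrank_eq hle ?_
    have h1 := LinearMap.finrank_range_add_finrank_ker T
    have h2 := Submodule.finrank_add_finrank_orthogonal (K := LinearMap.ker T)
    omega
  have hvmem : (WithLp.toLp 2 v : EuclideanSpace ℝ (Fin m)) ∈ (LinearMap.ker T)ᗮ := by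
    intro z hz
    have hz' : B.mulVec (z : Fin m → ℝ) = 0 := by
      have := LinearMap.mem_ker.mp hz
      rw [hT, Matrix.toEuclideanLin_apply] at this
      simpa using congrArg (WithLp.equiv 2 (Fin m → ℝ)) this
    have := hv (z : Fin m → ℝ) hz'
    rw [real_inner_comm]
    simpa [PiLp.inner_apply, RCLike.inner_apply, dotProduct, mul_comm] using this
  rw [← hrange] at hvmem
  obtain ⟨u, hu⟩ := hvmem
  refine ⟨(WithLp.equiv 2 (Fin m → ℝ)) u, ?_⟩
  have := congrArg (WithLp.equiv 2 (Fin m → ℝ)) hu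
  rw [hT, Matrix.toEuclideanLin_apply] at this
  simpa using this

theorem converse_dir (hsupp : μ (Set.Iio 0) = 0)
    (hmom : ∀ j ≤ 2*k, Integrable (fun A : ℝ => A ^ j) μ ∧ (∫ A, A ^ j ∂μ) = c j) :
    ((Matrix.of fun i j : Fin (k + 1) => c ((i : ℕ) + (j : ℕ))).PosSemidef ∧
     (Matrix.of fun i j : Fin k => c ((i : ℕ) + (j : ℕ) + 1)).PosSemidef ∧
     (∃ u : Fin k → ℝ,
        (Matrix.of fun i j : Fin k => c ((i : ℕ) + (j : ℕ) + 1)).mulVec u =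
          fun i : Fin k => c (k + 1 + (i : ℕ)))) := by
  have hae : ∀ᵐ A ∂μ, 0 ≤ A := by
    rw [ae_iff]
    convert hsupp using 2
    ext A
    simp [Set.mem_Iio, not_le]
  refine ⟨posSemidef_iff_dotProduct_mulVec.mpr ⟨?_, ?_⟩, posSemidef_iff_dotProduct_mulVec.mpr ⟨?_, ?_⟩, ?_⟩
  · ext i j
    simp [conjTranspose_apply, Nat.add_comm]
  · intro x
    have key := mom_double hmom (k+1) x x 0 (fun i => (i:ℕ)) (fun i => (i:ℕ))
      (fun i j => by have := i.isLt; have := j.isLt; omega)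
    have hform : star x ⬝ᵥ ((Matrix.of fun i j : Fin (k + 1) => c ((i : ℕ) + (j : ℕ))) *ᵥ x)
        = ∑ i, ∑ j, x i * x j * c (0 + (i:ℕ) + (j:ℕ)) := by
      simp only [star_trivial, dotProduct, mulVec, Finset.mul_sum, of_apply]
      refine Finset.sum_congr rfl fun i _ => Finset.sum_congr rfl fun j _ => ?_
      rw [Nat.zero_add]; ring
    rw [hform, ← key.2]
    refine integral_nonneg_of_ae ?_
    filter_upwards with A
    simp only [Pi.zero_apply, pow_zero, one_mul]
    exact mul_self_nonneg _
  · ext i j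
    simp [conjTranspose_apply]
    rw [Nat.add_comm (j:ℕ) (i:ℕ)]
  · intro x
    have key := mom_double hmom k x x 1 (fun i => (i:ℕ)) (fun i => (i:ℕ))
      (fun i j => by have := i.isLt; have := j.isLt; omega)
    have hform : star x ⬝ᵥ ((Matrix.of fun i j : Fin k => c ((i : ℕ) + (j : ℕ) + 1)) *ᵥ x)
        = ∑ i, ∑ j, x i * x j * c (1 + (i:ℕ) + (j:ℕ)) := by
      simp only [star_trivial, dotProduct, mulVec, Finset.mul_sum, of_apply]
      refine Finset.sum_congr rfl fun i _ => Finset.sum_congr rfl fun j _ => ?_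
      have : (i:ℕ) + (j:ℕ) + 1 = 1 + (i:ℕ) + (j:ℕ) := by omega
      rw [this]; ring
    rw [hform, ← key.2]
    refine integral_nonneg_of_ae ?_
    filter_upwards [hae] with A hA
    simp only [Pi.zero_apply, pow_one, mul_assoc]
    exact mul_nonneg hA (mul_self_nonneg _)
  · refine symm_range _ (by ext i j; simp [conjTranspose_apply]; rw [Nat.add_comm (j:ℕ) (i:ℕ)]) _ ?_
    intro w hw
    -- q A := ∑ i, w i * A^i ; from B w = 0 we get ∫ A q² = 0
    have key := mom_double hmom k w w 1 (fun i => (i:ℕ)) (fun i => (i:ℕ))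
      (fun i j => by have := i.isLt; have := j.isLt; omega)
    have hzero : (∫ A : ℝ, A^(1:ℕ) * (∑ i, w i * A ^ (i:ℕ)) * (∑ j, w j * A ^ (j:ℕ)) ∂μ) = 0 := by
      rw [key.2]
      have : ∀ i : Fin k, ∑ j, w i * w j * c (1 + (i:ℕ) + (j:ℕ)) = w i * ((Matrix.of fun i j : Fin k => c ((i : ℕ) + (j : ℕ) + 1)) *ᵥ w) i := by
        intro i
        simp only [mulVec, of_apply, dotProduct, Finset.mul_sum]
        refine Finset.sum_congr rfl fun j _ => ?_
        have : (i:ℕ) + (j:ℕ) + 1 = 1 + (i:ℕ) + (j:ℕ) := by omega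
        rw [this]; ring
      rw [Finset.sum_congr rfl fun i _ => this i, hw]
      simp
    have haez : (fun A : ℝ => A^(1:ℕ) * (∑ i, w i * A ^ (i:ℕ)) * (∑ j, w j * A ^ (j:ℕ))) =ᵐ[μ] 0 := by
      rw [← integral_eq_zero_iff_of_nonneg_ae ?_ key.1]
      · exact hzero
      · filter_upwards [hae] with A hA
        simp only [Pi.zero_apply, pow_one, mul_assoc]
        exact mul_nonneg hA (mul_self_nonneg _)
    -- conclude ∫ A^{k+1} q = 0
    have haez2 : (fun A : ℝ => A^(k+1) * (∑ i, w i * A ^ (i:ℕ))) =ᵐ[μ] 0 := by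
      filter_upwards [haez] with A hA
      simp only [Pi.zero_apply] at hA ⊢
      rcases mul_eq_zero.mp hA with h | h
      · rcases mul_eq_zero.mp h with h' | h'
        · rw [pow_one] at h'
          rw [h']
          simp
        · rw [h', mul_zero]
      · rw [h, mul_zero]
    have hkq : (∫ A : ℝ, A^(k+1) * (∑ i, w i * A ^ (i:ℕ)) ∂μ) = 0 := by
      rw [integral_congr_ae haez2]; simp
    have hsing := mom_single hmom k w (k+1) (fun i => (i:ℕ))
      (fun i => by have := i.isLt; omega)
    rw [hsing] at hkq
    rw [← hkq]
    simp only [dotProduct]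
    exact Finset.sum_congr rfl fun i _ => by ring
end Aux


namespace STM
variable (k : ℕ) (c : ℕ → ℝ) (u : Fin k → ℝ)

def Hmat : Matrix (Fin (k+1)) (Fin (k+1)) ℝ := Matrix.of fun i j => c ((i:ℕ) + (j:ℕ))
def Bmat : Matrix (Fin k) (Fin k) ℝ := Matrix.of fun i j => c ((i:ℕ) + (j:ℕ) + 1)
def vvec : Fin k → ℝ := fun i => c (k + 1 + (i:ℕ))
def cc : ℕ → ℝ := fun m => if m = 2*k+1 then u ⬝ᵥ vvec k c else c m
def Bhat : Matrix (Fin (k+1)) (Fin (k+1)) ℝ :=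
  Matrix.of fun i j => cc k c u ((i:ℕ) + (j:ℕ) + 1)
def Amat : Matrix (Fin k) (Fin (k+1)) ℝ :=
  Matrix.of fun p i => if (i:ℕ) = (p:ℕ) then 1 else if (i:ℕ) = k then u p else 0

lemma cc_eq {m : ℕ} (hm : m ≤ 2*k) : cc k c u m = c m := by
  unfold cc; rw [if_neg (by omega)]

lemma Amat_castSucc (p j : Fin k) :
    Amat k u p j.castSucc = if (j:ℕ) = (p:ℕ) then 1 else 0 := by
  unfold Amat
  simp only [of_apply, Fin.coe_castSucc]
  by_cases h : (j:ℕ) = (p:ℕ)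
  · rw [if_pos h, if_pos h]
  · have hj := j.isLt
    rw [if_neg h, if_neg (by omega), if_neg h]

lemma Amat_last (p : Fin k) : Amat k u p (Fin.last k) = u p := by
  unfold Amat
  have hp := p.isLt
  simp only [of_apply, Fin.val_last]
  rw [if_neg (by omega)]
  simp

lemma BA_castSucc (p j : Fin k) :
    (Bmat k c * Amat k u) p j.castSucc = Bmat k c p j := by
  rw [mul_apply]
  simp only [Amat_castSucc]
  rw [Finset.sum_eq_single j]
  · rw [if_pos rfl, mul_one]
  · intro q _ hq
    rw [if_neg (fun h => hq (Fin.ext h).symm), mul_zero]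
  · intro h; exact absurd (Finset.mem_univ j) h

lemma BA_last (p : Fin k) (hu : Bmat k c *ᵥ u = vvec k c) :
    (Bmat k c * Amat k u) p (Fin.last k) = vvec k c p := by
  rw [mul_apply]
  simp only [Amat_last]
  have : ∑ q, Bmat k c p q * u q = (Bmat k c *ᵥ u) p := by
    rw [mulVec, dotProduct]
  rw [this, hu]




lemma sum_if_one {m : ℕ} (i : Fin m) (X : Fin m → ℝ) :
    (∑ p : Fin m, (if (i:ℕ) = (p:ℕ) then (1:ℝ) else 0) * X p) = X i := by
  rw [Finset.sum_eq_single i]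
  · rw [if_pos rfl, one_mul]
  · intro q _ hq
    rw [if_neg (fun h => hq (Fin.ext h).symm), zero_mul]
  · intro h; exact absurd (Finset.mem_univ i) h

lemma Bhat_eq (k : ℕ) (c : ℕ → ℝ) (u : Fin k → ℝ) (hu : Bmat k c *ᵥ u = vvec k c) :
    Bhat k c u = (Amat k u)ᴴ * Bmat k c * Amat k u := by
  ext i j
  rw [Matrix.mul_assoc, mul_apply]
  simp only [conjTranspose_apply, star_trivial]
  induction i using Fin.lastCases with
  | cast i =>
    rw [Finset.sum_congr rfl fun p _ => by rw [Amat_castSucc], sum_if_one]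
    induction j using Fin.lastCases with
    | cast j =>
      rw [BA_castSucc]
      show cc k c u ((i.castSucc:ℕ) + (j.castSucc:ℕ) + 1) = Bmat k c i j
      have hi := i.isLt; have hj := j.isLt
      simp only [Fin.coe_castSucc]
      rw [cc_eq k c u (by omega)]
      rfl
    | last =>
      rw [BA_last k c u i hu]
      show cc k c u ((i.castSucc:ℕ) + (Fin.last k : ℕ) + 1) = vvec k c i
      have hi := i.isLt
      simp only [Fin.coe_castSucc, Fin.val_last]
      rw [cc_eq k c u (by omega)]
      show c ((i:ℕ) + k + 1) = c (k + 1 + (i:ℕ))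
      congr 1
      omega
  | last =>
    rw [Finset.sum_congr rfl fun p _ => by rw [Amat_last]]
    induction j using Fin.lastCases with
    | cast j =>
      have h1 : ∀ p : Fin k, u p * (Bmat k c * Amat k u) p j.castSucc
          = Bmat k c j p * u p := by
        intro p
        rw [BA_castSucc]
        show u p * c ((p:ℕ) + (j:ℕ) + 1) = c ((j:ℕ) + (p:ℕ) + 1) * u p
        rw [mul_comm]
        congr 2
        omega
      rw [Finset.sum_congr rfl fun p _ => h1 p]
      have h2 : ∑ p, Bmat k c j p * u p = (Bmat k c *ᵥ u) j := rfl
      rw [h2, hu]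
      show cc k c u ((Fin.last k:ℕ) + (j.castSucc:ℕ) + 1) = vvec k c j
      have hj := j.isLt
      simp only [Fin.coe_castSucc, Fin.val_last]
      rw [cc_eq k c u (by omega)]
      show c (k + (j:ℕ) + 1) = c (k + 1 + (j:ℕ))
      congr 1
      omega
    | last =>
      rw [Finset.sum_congr rfl fun p _ => by rw [BA_last k c u p hu]]
      have h2 : ∑ p, u p * vvec k c p = u ⬝ᵥ vvec k c := rfl
      rw [h2]
      show cc k c u ((Fin.last k:ℕ) + (Fin.last k:ℕ) + 1) = u ⬝ᵥ vvec k c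
      unfold cc
      rw [if_pos (by simp only [Fin.val_last]; omega)]



lemma Bmat_symm : (Bmat k c)ᵀ = Bmat k c := by
  ext i j
  show c ((j:ℕ) + (i:ℕ) + 1) = c ((i:ℕ) + (j:ℕ) + 1)
  congr 1; omega

lemma Bhat_col (i : Fin k) (j : Fin (k+1)) :
    Bhat k c u j i.castSucc = Hmat k c j i.succ := by
  have hi := i.isLt; have hj := j.isLt
  show cc k c u ((j:ℕ) + (i.castSucc:ℕ) + 1) = c ((j:ℕ) + (i.succ:ℕ))
  simp only [Fin.coe_castSucc, Fin.val_succ]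
  rw [cc_eq k c u (by omega)]
  have h9 : (j:ℕ) + (i:ℕ) + 1 = (j:ℕ) + ((i:ℕ) + 1) := by omega
  rw [h9]

lemma ker_sub (hB : (Bmat k c).PosSemidef) (hu : Bmat k c *ᵥ u = vvec k c)
    (x : Fin (k+1) → ℝ) (hx : Hmat k c *ᵥ x = 0) : Bhat k c u *ᵥ x = 0 := by
  set x' : Fin k → ℝ := fun i => x i.castSucc with hx'
  set xl : ℝ := x (Fin.last k) with hxl
  set w : Fin k → ℝ := x' + xl • u with hw
  -- the canonical row sums
  have hA2 : ∀ j : Fin k, (Hmat k c *ᵥ x) j.succ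
      = (∑ i : Fin k, c ((j:ℕ)+(i:ℕ)+1) * x' i) + c ((j:ℕ)+k+1) * xl := by
    intro j
    show (∑ i : Fin (k+1), Hmat k c j.succ i * x i) = _
    rw [Fin.sum_univ_castSucc]
    congr 1
    · refine Finset.sum_congr rfl fun i _ => ?_
      show c ((j.succ:ℕ) + (i.castSucc:ℕ)) * x i.castSucc = c ((j:ℕ)+(i:ℕ)+1) * x' i
      simp only [Fin.val_succ, Fin.coe_castSucc, hx']
      congr 2
      omega
    · show c ((j.succ:ℕ) + (Fin.last k : ℕ)) * x (Fin.last k) = c ((j:ℕ)+k+1) * xl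
      simp only [Fin.val_succ, Fin.val_last, hxl]
      congr 2
      omega
  have hBw : Bmat k c *ᵥ w = 0 := by
    rw [hw, mulVec_add, mulVec_smul, hu]
    funext j
    have h0 : (Hmat k c *ᵥ x) j.succ = 0 := by rw [hx]; rfl
    rw [hA2 j] at h0
    show (Bmat k c *ᵥ x') j + (xl • vvec k c) j = 0
    have h6 : (Bmat k c *ᵥ x') j = ∑ i : Fin k, c ((j:ℕ)+(i:ℕ)+1) * x' i := rfl
    have h7 : (xl • vvec k c) j = xl * c (k+1+(j:ℕ)) := rfl
    rw [h6, h7]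
    show (∑ i : Fin k, c ((j:ℕ)+(i:ℕ)+1) * x' i) + xl * c (k+1+(j:ℕ)) = 0
    have h8 : k+1+(j:ℕ) = (j:ℕ)+k+1 := by omega
    rw [mul_comm, h8]
    exact h0
  funext j
  induction j using Fin.lastCases with
  | cast j =>
    have h0 : (Hmat k c *ᵥ x) j.succ = 0 := by rw [hx]; rfl
    show (∑ i : Fin (k+1), Bhat k c u j.castSucc i * x i) = 0
    have : ∀ i : Fin (k+1), Bhat k c u j.castSucc i * x i = Hmat k c j.succ i * x i := by
      intro i
      have hj := j.isLt; have hi := i.isLt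
      show cc k c u ((j.castSucc:ℕ) + (i:ℕ) + 1) * x i = c ((j.succ:ℕ) + (i:ℕ)) * x i
      simp only [Fin.coe_castSucc, Fin.val_succ]
      rw [cc_eq k c u (by omega)]
      have h9 : (j:ℕ) + (i:ℕ) + 1 = (j:ℕ) + 1 + (i:ℕ) := by omega
      rw [h9]
    rw [Finset.sum_congr rfl fun i _ => this i]
    exact h0
  | last =>
    show (∑ i : Fin (k+1), Bhat k c u (Fin.last k) i * x i) = 0
    rw [Fin.sum_univ_castSucc]
    have h1 : ∀ i : Fin k, Bhat k c u (Fin.last k) i.castSucc * x i.castSucc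
        = vvec k c i * x' i := by
      intro i
      have hi := i.isLt
      show cc k c u ((Fin.last k:ℕ) + (i.castSucc:ℕ) + 1) * x i.castSucc = vvec k c i * x' i
      simp only [Fin.val_last, Fin.coe_castSucc]
      rw [cc_eq k c u (by omega)]
      show c (k + (i:ℕ) + 1) * x i.castSucc = c (k+1+(i:ℕ)) * x' i
      congr 2
      omega
    have h2 : Bhat k c u (Fin.last k) (Fin.last k) * x (Fin.last k)
        = (u ⬝ᵥ vvec k c) * xl := by
      show cc k c u ((Fin.last k:ℕ) + (Fin.last k:ℕ) + 1) * x (Fin.last k) = _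
      simp only [Fin.val_last, hxl]
      unfold cc
      rw [if_pos (by omega)]
    rw [Finset.sum_congr rfl fun i _ => h1 i, h2]
    have h3 : (∑ i : Fin k, vvec k c i * x' i) = vvec k c ⬝ᵥ x' := rfl
    have h4 : vvec k c ⬝ᵥ x' = u ⬝ᵥ (Bmat k c *ᵥ x') := by
      rw [← hu]
      calc (Bmat k c *ᵥ u) ⬝ᵥ x' = (u ᵥ* (Bmat k c)ᵀ) ⬝ᵥ x' := by rw [vecMul_transpose]
        _ = (u ᵥ* Bmat k c) ⬝ᵥ x' := by rw [Bmat_symm]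
        _ = u ⬝ᵥ (Bmat k c *ᵥ x') := (dotProduct_mulVec _ _ _).symm
    have h5 : u ⬝ᵥ vvec k c = u ⬝ᵥ (Bmat k c *ᵥ u) := by rw [← hu]
    rw [h3, h4, h5]
    have : u ⬝ᵥ (Bmat k c *ᵥ x') + u ⬝ᵥ (Bmat k c *ᵥ u) * xl
        = u ⬝ᵥ (Bmat k c *ᵥ w) := by
      rw [hw, mulVec_add, mulVec_smul, dotProduct_add, dotProduct_smul]
      simp [smul_eq_mul]
      ring
    rw [this, hBw]
    simp

lemma realCT {m : Type*} (X : Matrix m m ℝ) : Xᴴ = Xᵀ := by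
  ext i j; simp [conjTranspose_apply]

variable {n : ℕ}

-- generic: symmetric PSD matrix T, vector chain gv with T-action, produces moments
lemma spectral_moments (T : Matrix (Fin n) (Fin n) ℝ) (hT : T.PosSemidef)
    (g : Fin n → ℝ) :
    ∃ lam w : Fin n → ℝ, (∀ i, 0 ≤ lam i) ∧ (∀ i, 0 ≤ w i) ∧
      ∀ j : ℕ, g ⬝ᵥ ((T^j) *ᵥ g) = ∑ i, w i * lam i ^ j := by
  set hTm := hT.isHermitian
  set lam := hTm.eigenvalues with hlam
  set V : Matrix (Fin n) (Fin n) ℝ := (hTm.eigenvectorUnitary : Matrix (Fin n) (Fin n) ℝ) with hV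
  have hVV : V * Vᴴ = 1 := mem_unitaryGroup_iff.mp hTm.eigenvectorUnitary.2
  have hVV' : Vᴴ * V = 1 := mem_unitaryGroup_iff'.mp hTm.eigenvectorUnitary.2
  have hspec : T = V * diagonal lam * Vᴴ := by
    have h := hTm.spectral_theorem
    have h2 : diagonal (RCLike.ofReal ∘ lam) = diagonal lam := by norm_num [RCLike.ofReal]
    rw [h2] at h
    exact h
  have hTpow : ∀ j : ℕ, T^j = V * diagonal (fun i => lam i ^ j) * Vᴴ := by
    intro j
    induction j with
    | zero =>
      simp only [pow_zero]
      rw [show (diagonal fun _ : Fin n => (1:ℝ)) = 1 by simp, Matrix.mul_one, hVV]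
    | succ j ih =>
      rw [pow_succ, ih, hspec]
      calc V * diagonal (fun i => lam i ^ j) * Vᴴ * (V * diagonal lam * Vᴴ)
          = V * diagonal (fun i => lam i ^ j) * (Vᴴ * V) * diagonal lam * Vᴴ := by
            simp only [Matrix.mul_assoc]
        _ = V * (diagonal (fun i => lam i ^ j) * diagonal lam) * Vᴴ := by
            rw [hVV']
            simp only [Matrix.mul_one, Matrix.mul_assoc]
        _ = V * diagonal (fun i => lam i ^ (j+1)) * Vᴴ := by
            have hfun : (fun i => lam i ^ j * lam i) = fun i => lam i ^ (j+1) :=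
              funext fun i => (pow_succ _ _).symm
            rw [diagonal_mul_diagonal, hfun]
  set a : Fin n → ℝ := Vᴴ *ᵥ g with ha
  refine ⟨lam, fun i => (a i)^2, hT.eigenvalues_nonneg, fun i => sq_nonneg _, ?_⟩
  intro j
  rw [hTpow j]
  have h1 : (V * diagonal (fun i => lam i ^ j) * Vᴴ) *ᵥ g
      = V *ᵥ (diagonal (fun i => lam i ^ j) *ᵥ a) := by
    rw [ha, mulVec_mulVec, mulVec_mulVec, Matrix.mul_assoc]
  rw [h1, dotProduct_mulVec]
  have h2 : g ᵥ* V = a := by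
    rw [ha, realCT, ← vecMul_transpose, transpose_transpose]
  rw [h2]
  rw [dotProduct]
  refine Finset.sum_congr rfl fun i _ => ?_
  rw [mulVec_diagonal]
  ring


lemma exists_T (k : ℕ) (c : ℕ → ℝ) (u : Fin k → ℝ)
    (hH : (Hmat k c).PosSemidef) (hB : (Bmat k c).PosSemidef)
    (hu : Bmat k c *ᵥ u = vvec k c) :
    ∃ (T : Matrix (Fin (k+1)) (Fin (k+1)) ℝ) (g : Fin (k+1) → ℝ),
      T.PosSemidef ∧ ∀ j ≤ 2*k, g ⬝ᵥ ((T^j) *ᵥ g) = c j := by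
  have hHm : (Hmat k c).IsHermitian := hH.isHermitian
  set d : Fin (k+1) → ℝ := hHm.eigenvalues with hd_def
  have hd : ∀ i, 0 ≤ d i := hH.eigenvalues_nonneg
  set P : Matrix (Fin (k+1)) (Fin (k+1)) ℝ := (hHm.eigenvectorUnitary : Matrix (Fin (k+1)) (Fin (k+1)) ℝ) with hP_def
  have hPP : P * Pᴴ = 1 := mem_unitaryGroup_iff.mp hHm.eigenvectorUnitary.2
  have hPP' : Pᴴ * P = 1 := mem_unitaryGroup_iff'.mp hHm.eigenvectorUnitary.2
  have hspec : Hmat k c = P * diagonal d * Pᴴ := by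
    have h := hHm.spectral_theorem
    have h2 : diagonal (RCLike.ofReal ∘ d) = diagonal d := by norm_num [RCLike.ofReal]
    rw [h2] at h
    exact h
  set S : Matrix (Fin (k+1)) (Fin (k+1)) ℝ := diagonal (fun i => Real.sqrt (d i)) with hS_def
  set E : Matrix (Fin (k+1)) (Fin (k+1)) ℝ := diagonal (fun i => (Real.sqrt (d i))⁻¹) with hE_def
  set Pi' : Matrix (Fin (k+1)) (Fin (k+1)) ℝ := diagonal (fun i => if d i = 0 then (0:ℝ) else 1) with hPi_def
  set M : Matrix (Fin (k+1)) (Fin (k+1)) ℝ := Pᴴ * Bhat k c u * P with hM_def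
  set T : Matrix (Fin (k+1)) (Fin (k+1)) ℝ := E * M * E with hT_def
  -- diagonal identities
  have hES : E * S = Pi' := by
    have hfun : (fun i => (Real.sqrt (d i))⁻¹ * Real.sqrt (d i))
        = (fun i => if d i = 0 then (0:ℝ) else 1) := by
      funext i
      by_cases h : d i = 0
      · simp [h]
      · rw [if_neg h]
        exact inv_mul_cancel₀ (ne_of_gt (Real.sqrt_pos.mpr (lt_of_le_of_ne (hd i) (Ne.symm h))))
    rw [hE_def, hS_def, hPi_def, diagonal_mul_diagonal, hfun]
  have hPiS : Pi' * S = S := by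
    have hfun : (fun i => (if d i = 0 then (0:ℝ) else 1) * Real.sqrt (d i))
        = (fun i => Real.sqrt (d i)) := by
      funext i
      by_cases h : d i = 0
      · simp [h]
      · rw [if_neg h, one_mul]
    rw [hPi_def, hS_def, diagonal_mul_diagonal, hfun]
  have hED : E * diagonal d = Pi' * S := by
    have hfun : (fun i => (Real.sqrt (d i))⁻¹ * d i)
        = (fun i => (if d i = 0 then (0:ℝ) else 1) * Real.sqrt (d i)) := by
      funext i
      by_cases h : d i = 0
      · simp [h]
      · rw [if_neg h, one_mul]
        have hs : Real.sqrt (d i) ≠ 0 :=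
          ne_of_gt (Real.sqrt_pos.mpr (lt_of_le_of_ne (hd i) (Ne.symm h)))
        field_simp
        rw [Real.sq_sqrt (hd i)]
    rw [hE_def, hPi_def, hS_def, diagonal_mul_diagonal, diagonal_mul_diagonal, hfun]
  have hSS : S * S = diagonal d := by
    have hfun : (fun i => Real.sqrt (d i) * Real.sqrt (d i)) = d := by
      funext i
      exact Real.mul_self_sqrt (hd i)
    rw [hS_def, diagonal_mul_diagonal, hfun]
  have hEherm : Eᴴ = E := by rw [realCT, diagonal_transpose]
  -- positivity
  have hBhatPSD : (Bhat k c u).PosSemidef := by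
    rw [Bhat_eq k c u hu]
    exact hB.conjTranspose_mul_mul_same _
  have hMPSD : M.PosSemidef := hBhatPSD.conjTranspose_mul_mul_same P
  have hTPSD : T.PosSemidef := by
    have h := hMPSD.conjTranspose_mul_mul_same E
    rw [hEherm] at h
    exact h
  -- kernel facts
  have hMker : ∀ i : Fin (k+1), d i = 0 → ∀ j, M j i = 0 := by
    intro i hdi j
    have hHy : Hmat k c *ᵥ (P *ᵥ Pi.single i 1) = 0 := by
      rw [mulVec_mulVec, hspec]
      have : P * diagonal d * Pᴴ * P = P * diagonal d := by
        calc P * diagonal d * Pᴴ * P = P * diagonal d * (Pᴴ * P) := by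
              simp only [Matrix.mul_assoc]
          _ = P * diagonal d := by rw [hPP', Matrix.mul_one]
      rw [this]
      funext r
      rw [mulVec_single]
      show (P * diagonal d) r i * 1 = 0
      rw [mul_diagonal, hdi, mul_zero, zero_mul]
    have hBy : Bhat k c u *ᵥ (P *ᵥ Pi.single i 1) = 0 :=
      ker_sub k c u hB hu _ hHy
    have hcol : M *ᵥ Pi.single i 1 = 0 := by
      rw [hM_def, ← mulVec_mulVec, ← mulVec_mulVec, hBy, mulVec_zero]
    have : (M *ᵥ Pi.single i 1) j = 0 := by rw [hcol]; rfl
    rw [← this]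
    rw [mulVec_single]
    show M j i = M j i * 1
    rw [mul_one]
  have hMPi : M * Pi' = M := by
    ext i j
    rw [hPi_def, mul_diagonal]
    by_cases h : d j = 0
    · rw [if_pos h, mul_zero, hMker j h i]
    · rw [if_neg h, mul_one]
  -- the vectors
  set gv : Fin (k+1) → (Fin (k+1) → ℝ) := fun i => (S * Pᴴ) *ᵥ Pi.single i 1 with hgv_def
  have key1 : ∀ i : Fin k, T *ᵥ gv i.castSucc = gv i.succ := by
    intro i
    have htsp : T * (S * Pᴴ) = E * Pᴴ * Bhat k c u := by
      calc T * (S * Pᴴ) = E * M * (E * S) * Pᴴ := by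
            rw [hT_def]; simp only [Matrix.mul_assoc]
        _ = E * M * Pi' * Pᴴ := by rw [hES]
        _ = E * (M * Pi') * Pᴴ := by simp only [Matrix.mul_assoc]
        _ = E * M * Pᴴ := by rw [hMPi]
        _ = E * (Pᴴ * Bhat k c u * P) * Pᴴ := by rw [hM_def]
        _ = E * Pᴴ * Bhat k c u * (P * Pᴴ) := by simp only [Matrix.mul_assoc]
        _ = E * Pᴴ * Bhat k c u := by rw [hPP, Matrix.mul_one]
    have hcol : Bhat k c u *ᵥ Pi.single i.castSucc 1 = Hmat k c *ᵥ Pi.single i.succ 1 := by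
      funext j
      rw [mulVec_single, mulVec_single]
      show Bhat k c u j i.castSucc * 1 = Hmat k c j i.succ * 1
      rw [Bhat_col]
    have hEPH : E * Pᴴ * Hmat k c = S * Pᴴ := by
      calc E * Pᴴ * Hmat k c = E * Pᴴ * (P * diagonal d * Pᴴ) := by rw [← hspec]
        _ = E * (Pᴴ * P) * diagonal d * Pᴴ := by simp only [Matrix.mul_assoc]
        _ = E * diagonal d * Pᴴ := by rw [hPP', Matrix.mul_one]
        _ = Pi' * S * Pᴴ := by rw [hED]
        _ = Pi' * (S * Pᴴ) := by simp only [Matrix.mul_assoc]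
        _ = S * Pᴴ := by rw [← Matrix.mul_assoc, hPiS]
    calc T *ᵥ gv i.castSucc = (T * (S * Pᴴ)) *ᵥ Pi.single i.castSucc 1 := by
          rw [hgv_def, mulVec_mulVec]
      _ = (E * Pᴴ) *ᵥ (Bhat k c u *ᵥ Pi.single i.castSucc 1) := by
          rw [htsp, ← mulVec_mulVec]
      _ = (E * Pᴴ * Hmat k c) *ᵥ Pi.single i.succ 1 := by
          rw [hcol, mulVec_mulVec]
      _ = gv i.succ := by rw [hEPH, hgv_def]
  have key2 : ∀ i j : Fin (k+1), gv i ⬝ᵥ gv j = c ((i:ℕ) + (j:ℕ)) := by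
    intro i j
    have hNtN : (S * Pᴴ)ᵀ * (S * Pᴴ) = Hmat k c := by
      have h1 : (S * Pᴴ)ᵀ = P * S := by
        rw [transpose_mul, realCT, transpose_transpose, hS_def, diagonal_transpose]
      rw [h1, hspec]
      calc P * S * (S * Pᴴ) = P * (S * S) * Pᴴ := by simp only [Matrix.mul_assoc]
        _ = P * diagonal d * Pᴴ := by rw [hSS]
    calc gv i ⬝ᵥ gv j = (gv i ᵥ* (S * Pᴴ)) ⬝ᵥ Pi.single j 1 := by
          rw [hgv_def]; rw [dotProduct_mulVec]
      _ = (((S * Pᴴ)ᵀ * (S * Pᴴ)) *ᵥ Pi.single i 1) ⬝ᵥ Pi.single j 1 := by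
          rw [hgv_def]
          rw [show gv i ᵥ* (S * Pᴴ) = (S * Pᴴ)ᵀ *ᵥ gv i by
            rw [← vecMul_transpose, transpose_transpose]]
          rw [hgv_def, mulVec_mulVec]
      _ = (Hmat k c *ᵥ Pi.single i 1) ⬝ᵥ Pi.single j 1 := by rw [hNtN]
      _ = c ((i:ℕ) + (j:ℕ)) := by
          rw [dotProduct_single, mulVec_single]
          show Hmat k c j i * 1 * 1 = c ((i:ℕ) + (j:ℕ))
          rw [mul_one, mul_one]
          show c ((j:ℕ) + (i:ℕ)) = c ((i:ℕ) + (j:ℕ))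
          congr 1
          omega
  have hTsym : Tᵀ = T := by rw [← realCT]; exact hTPSD.isHermitian
  have key3 : ∀ (m : ℕ) (hm : m ≤ k), (T ^ m) *ᵥ gv ⟨0, by omega⟩ = gv ⟨m, by omega⟩ := by
    intro m
    induction m with
    | zero => intro _; rw [pow_zero, one_mulVec]
    | succ m ih =>
      intro hm
      rw [pow_succ', ← mulVec_mulVec, ih (by omega)]
      have h1 : (⟨m, by omega⟩ : Fin (k+1)) = (⟨m, by omega⟩ : Fin k).castSucc := rfl
      have h2 : (⟨m+1, by omega⟩ : Fin (k+1)) = (⟨m, by omega⟩ : Fin k).succ := rfl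
      rw [h1, key1, ← h2]
  refine ⟨T, gv ⟨0, by omega⟩, hTPSD, ?_⟩
  intro j hj
  set i1 := min j k with hi1
  set i2 := j - i1 with hi2
  have h1 : i1 ≤ k := min_le_right _ _
  have h2 : i2 ≤ k := by omega
  have h3 : i1 + i2 = j := by omega
  rw [← h3, pow_add, ← mulVec_mulVec, dotProduct_mulVec]
  have h4 : gv ⟨0, by omega⟩ ᵥ* T ^ i1 = gv ⟨i1, by omega⟩ := by
    rw [← transpose_transpose (T ^ i1), vecMul_transpose, transpose_pow, hTsym, key3 i1 h1]
  rw [h4, key3 i2 h2, key2]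

theorem measure_of_atoms (n : ℕ) (lam w : Fin n → ℝ) (hlam : ∀ i, 0 ≤ lam i)
    (hw : ∀ i, 0 ≤ w i) :
    ∃ μ : MeasureTheory.Measure ℝ, MeasureTheory.IsFiniteMeasure μ ∧ μ (Set.Iio 0) = 0 ∧
      ∀ j : ℕ, MeasureTheory.Integrable (fun A : ℝ => A ^ j) μ ∧
        (∫ A, A ^ j ∂μ) = ∑ i, w i * lam i ^ j := by
  refine ⟨∑ i, ENNReal.ofReal (w i) • Measure.dirac (lam i), ?_, ?_, ?_⟩
  · constructor
    rw [Measure.finset_sum_apply]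
    refine ENNReal.sum_lt_top.mpr fun i _ => ?_
    simp [lt_top_iff_ne_top]
  · rw [Measure.finset_sum_apply]
    refine Finset.sum_eq_zero fun i _ => ?_
    rw [Measure.smul_apply, Measure.dirac_apply' _ measurableSet_Iio]
    simp [Set.indicator_apply, not_lt.mpr (hlam i)]
  · intro j
    have hint : ∀ i : Fin n, Integrable (fun A : ℝ => A ^ j)
        (ENNReal.ofReal (w i) • Measure.dirac (lam i)) := by
      intro i
      refine Integrable.smul_measure ?_ (by simp)
      refine ⟨(measurable_id.pow_const j).aestronglyMeasurable, ?_⟩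
      rw [hasFiniteIntegral_iff_norm]
      rw [lintegral_dirac' _ (by fun_prop)]
      exact ENNReal.ofReal_lt_top
    constructor
    · exact integrable_finset_sum_measure.mpr fun i _ => hint i
    · rw [integral_finset_sum_measure fun i _ => hint i]
      refine Finset.sum_congr rfl fun i _ => ?_
      rw [integral_smul_measure, integral_dirac]
      simp [ENNReal.toReal_ofReal (hw i)]

end STM


open MeasureTheory

/-- Truncated Stieltjes moment problem, even case (Curto–Fialkow):
(c_0,…,c_{2k}) is a Stieltjes moment sequence iff the Hankel matrix
H_k is PSD, the k×k shifted Hankel matrix B_{k-1} is PSD, and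
(c_{k+1},…,c_{2k}) lies in the range of B_{k-1}. -/
theorem stmt_6 (k : ℕ) (c : ℕ → ℝ) :
    ((Matrix.of fun i j : Fin (k + 1) => c ((i : ℕ) + (j : ℕ))).PosSemidef ∧
     (Matrix.of fun i j : Fin k => c ((i : ℕ) + (j : ℕ) + 1)).PosSemidef ∧
     (∃ u : Fin k → ℝ,
        (Matrix.of fun i j : Fin k => c ((i : ℕ) + (j : ℕ) + 1)).mulVec u =
          fun i : Fin k => c (k + 1 + (i : ℕ))))
    ↔
    (∃ μ : Measure ℝ, IsFiniteMeasure μ ∧ μ (Set.Iio 0) = 0 ∧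
       ∀ j ≤ 2 * k,
         Integrable (fun A : ℝ => A ^ j) μ ∧ (∫ A, A ^ j ∂μ) = c j) := by
  constructor
  · rintro ⟨hH, hB, u, hu⟩
    obtain ⟨T, g, hT, hmomT⟩ := STM.exists_T k c u hH hB hu
    obtain ⟨lam, w, hlam, hw, hsum⟩ := STM.spectral_moments T hT g
    obtain ⟨μ, hfin, hzero, hmeas⟩ := STM.measure_of_atoms (k+1) lam w hlam hw
    refine ⟨μ, hfin, hzero, fun j hj => ⟨(hmeas j).1, ?_⟩⟩
    rw [(hmeas j).2, ← hsum j, hmomT j hj]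
  · rintro ⟨μ, _, hsupp, hmom⟩
    exact converse_dir hsupp hmom
end

section
/- Let r_0, r_1, r_2, r_3 be the moments up to order 3 of a finite positive Borel measure μ on [0,∞) that is not the zero measure. If the 2×2 Hankel matrix [[r_0, r_1],[r_1, r_2]] is singular (r_0 r_2 = r_1²) and positive semidefinite, then μ is a point mass: there exist a ≥ 0 and m > 0 such that ∫ f dμ = m·f(a) for all continuous f, and moreover r_j = m·a^j for j = 0,1,2,3. -/
open MeasureTheory

/-- If the 2×2 Hankel matrix of moments of a nonzero finite positive
measure on [0,∞) is singular (and PSD), the measure is a point mass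
m·δ_a with a ≥ 0, m > 0, and moments r_j = m·a^j for j = 0,…,3. -/
theorem stmt_8 (μ : Measure ℝ) [IsFiniteMeasure μ] (hμ : μ ≠ 0)
    (hsupp : μ (Set.Iio 0) = 0)
    (hint : ∀ j ≤ 3, Integrable (fun A : ℝ => A ^ j) μ)
    (r : ℕ → ℝ) (hr : ∀ j ≤ 3, r j = ∫ A, A ^ j ∂μ)
    (hsing : r 0 * r 2 = r 1 ^ 2)
    (hpsd : (Matrix.of ![![r 0, r 1], ![r 1, r 2]]).PosSemidef) :
    ∃ a : ℝ, 0 ≤ a ∧ ∃ m : ℝ, 0 < m ∧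
      (∀ f : ℝ → ℝ, Continuous f → (∫ x, f x ∂μ) = m * f a) ∧
      (∀ j ≤ 3, r j = m * a ^ j) := by
  set m : ℝ := (μ Set.univ).toReal with hm_def
  have hm : 0 < m := by
    have h1 : μ Set.univ ≠ 0 := by
      simpa [Measure.measure_univ_eq_zero] using hμ
    have h2 : μ Set.univ ≠ ⊤ := measure_ne_top μ _
    exact ENNReal.toReal_pos h1 h2
  have hr0 : r 0 = m := by
    rw [hr 0 (by norm_num)]
    simp [hm_def]
    rfl
  have hr0ne : r 0 ≠ 0 := by rw [hr0]; exact hm.ne'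
  set a : ℝ := r 1 / r 0 with ha_def
  have hi0 := hint 0 (by norm_num)
  have hi1 := hint 1 (by norm_num)
  have hi2 := hint 2 (by norm_num)
  have hint_sq : Integrable (fun x : ℝ => (x - a) ^ 2) μ := by
    have : (fun x : ℝ => (x - a) ^ 2)
        = fun x : ℝ => x ^ 2 + ((-(2 * a)) * x ^ 1 + a ^ 2 * x ^ 0) := by
      funext x; ring
    rw [this]
    exact hi2.add ((hi1.const_mul _).add (hi0.const_mul _))
  have hzero : (∫ x, (x - a) ^ 2 ∂μ) = 0 := by
    have expand : (fun x : ℝ => (x - a) ^ 2)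
        = fun x : ℝ => x ^ 2 + ((-(2 * a)) * x ^ 1 + a ^ 2 * x ^ 0) := by
      funext x; ring
    have hi1' : Integrable (fun x : ℝ => -(2 * a) * x ^ 1) μ := hi1.const_mul _
    have hi0' : Integrable (fun x : ℝ => a ^ 2 * x ^ 0) μ := hi0.const_mul _
    have hi10 : Integrable (fun x : ℝ => -(2 * a) * x ^ 1 + a ^ 2 * x ^ 0) μ :=
      hi1'.add hi0'
    rw [expand, integral_add hi2 hi10, integral_add hi1' hi0',
      integral_const_mul, integral_const_mul, ← hr 2 (by norm_num),
      ← hr 1 (by norm_num), ← hr 0 (by norm_num)]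
    field_simp [ha_def]
    have h1 : a * r 0 = r 1 := by rw [ha_def]; exact div_mul_cancel₀ _ hr0ne
    have h2 : r 2 = a * r 1 := by
      apply mul_left_cancel₀ hr0ne
      rw [hsing, ← h1]; ring
    linear_combination h2 + a * h1
  have hae : ∀ᵐ x ∂μ, x = a := by
    have h := (integral_eq_zero_iff_of_nonneg
      (fun x => sq_nonneg (x - a)) hint_sq).mp hzero
    filter_upwards [h] with x hx
    have : (x - a) ^ 2 = 0 := hx
    have := pow_eq_zero_iff (n := 2) (by norm_num) |>.mp this
    linarith [this]
  have hnonneg : ∀ᵐ x ∂μ, 0 ≤ x := by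
    rw [ae_iff]
    convert hsupp using 2
    ext x
    simp [Set.Iio, not_le]
  have ha : 0 ≤ a := by
    haveI : (ae μ).NeBot := ae_neBot.mpr hμ
    obtain ⟨x, hx1, hx2⟩ := (hae.and hnonneg).exists
    rwa [hx1] at hx2
  have hmain : ∀ f : ℝ → ℝ, Continuous f → (∫ x, f x ∂μ) = m * f a := by
    intro f hf
    have : (∫ x, f x ∂μ) = ∫ _, f a ∂μ := by
      apply integral_congr_ae
      filter_upwards [hae] with x hx
      rw [hx]
    rw [this, integral_const, smul_eq_mul]
    rfl
  refine ⟨a, ha, m, hm, hmain, ?_⟩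
  intro j hj
  rw [hr j hj, hmain (fun x => x ^ j) (continuous_pow j)]
end
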